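/- arXiv:1706.03976 — 5 statements merged into one kernel-verified Lean document; each statement's English description precedes it below -/
import Mathlib

section
/- Let C : ℂ⁴ → ℂ⁴ be the ℝ-linear involution given in lexicographic double-index coordinates by (Cw)_{(i,j)} = conj(w_{(j,i)}) for i,j ∈ {0,1}, i.e. C(w₁,w₂,w₃,w₄) = (conj w₁, conj w₃, conj w₂, conj w₄). Then: (1) C ∘ A(k) = A(k) ∘ C as ℝ-linear maps on ℂ⁴, for every k ∈ ℝ, so the real eigenspaces W₊ = {w : Cw = w} and W₋ = {w : Cw = −w}, each of ℝ-dimension 4, are invariant under every A(k); (2) the unital ℝ-subalgebra 𝒜 of Mat₄(ℂ) (viewed as a real algebra) generated by {A(k) : k ∈ ℝ} has dim_ℝ 𝒜 = 16; in fact, with the unitary U = (1/√2)·[[1−i,0,0,0],[0,1,−i,0],[0,−i,1,0],[0,0,0,1−i]] one has U·𝒜·U⁻¹ = Mat₄(ℝ) ⊂ Mat₄(ℂ); (3) 𝒜 acts irreducibly on each of W₊ and W₋: the only ℝ-subspaces of W₊ (respectively W₋) invariant under all the matrices A(k), k ∈ ℝ, are {0} and W₊ (respectively {0} and W₋). -/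
open Filter

/-- The Perron–Frobenius eigenvalue `λ = (1+√13)/2` of `M = [[1,1],[3,0]]`. -/
noncomputable def lam : ℝ := (1 + Real.sqrt 13) / 2

/-- `p(k) = e^{2πikλ} + e^{2πik(λ+1)} + e^{2πik(λ+2)}`. -/
noncomputable def pfun (k : ℝ) : ℂ :=
  Complex.exp (((2 * Real.pi * k * lam : ℝ) : ℂ) * Complex.I) +
  Complex.exp (((2 * Real.pi * k * (lam + 1) : ℝ) : ℂ) * Complex.I) +
  Complex.exp (((2 * Real.pi * k * (lam + 2) : ℝ) : ℂ) * Complex.I)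

/-- The Fourier matrix `B(k) = [[1,1],[p(k),0]]`. -/
noncomputable def Bmat (k : ℝ) : Matrix (Fin 2) (Fin 2) ℂ :=
  !![1, 1; pfun k, 0]

/-- `A(k) = B(k) ⊗ conj(B(k))`. -/
noncomputable def Amat (k : ℝ) : Matrix (Fin 2 × Fin 2) (Fin 2 × Fin 2) ℂ :=
  fun ij mn => Bmat k ij.1 mn.1 * (starRingEnd ℂ) (Bmat k ij.2 mn.2)

/-- The ℝ-linear involution `C`. -/
noncomputable def Cmap : (Fin 2 × Fin 2 → ℂ) →ₗ[ℝ] (Fin 2 × Fin 2 → ℂ) where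
  toFun w := fun ij => (starRingEnd ℂ) (w (ij.2, ij.1))
  map_add' x y := by funext ij; simp
  map_smul' c x := by
    funext ij
    simp [Complex.real_smul, Complex.conj_ofReal]

noncomputable def Wplus : Submodule ℝ (Fin 2 × Fin 2 → ℂ) :=
  LinearMap.ker (Cmap - LinearMap.id)

noncomputable def Wminus : Submodule ℝ (Fin 2 × Fin 2 → ℂ) :=
  LinearMap.ker (Cmap + LinearMap.id)

noncomputable def calA : Subalgebra ℝ (Matrix (Fin 2 × Fin 2) (Fin 2 × Fin 2) ℂ) :=
  Algebra.adjoin ℝ (Set.range Amat)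

noncomputable def Umat : Matrix (Fin 2 × Fin 2) (Fin 2 × Fin 2) ℂ := fun ij mn =>
  ((Real.sqrt 2 : ℝ) : ℂ)⁻¹ *
    (if ij = mn ∧ (ij = ((0 : Fin 2), (0 : Fin 2)) ∨ ij = ((1 : Fin 2), (1 : Fin 2))) then
        1 - Complex.I
      else if ij = mn ∧ (ij = ((0 : Fin 2), (1 : Fin 2)) ∨ ij = ((1 : Fin 2), (0 : Fin 2))) then
        1
      else if (ij = ((0 : Fin 2), (1 : Fin 2)) ∧ mn = ((1 : Fin 2), (0 : Fin 2))) ∨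
              (ij = ((1 : Fin 2), (0 : Fin 2)) ∧ mn = ((0 : Fin 2), (1 : Fin 2))) then
        -Complex.I
      else 0)

----------------------------------------------------------------------
-- Auxiliary definitions
----------------------------------------------------------------------

open Matrix Complex

/-- integer part of `U`. -/
noncomputable def U0 : Matrix (Fin 2 × Fin 2) (Fin 2 × Fin 2) ℂ := fun ij mn =>
    (if ij = mn ∧ (ij = ((0 : Fin 2), (0 : Fin 2)) ∨ ij = ((1 : Fin 2), (1 : Fin 2))) then
        1 - Complex.I
      else if ij = mn ∧ (ij = ((0 : Fin 2), (1 : Fin 2)) ∨ ij = ((1 : Fin 2), (0 : Fin 2))) then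
        1
      else if (ij = ((0 : Fin 2), (1 : Fin 2)) ∧ mn = ((1 : Fin 2), (0 : Fin 2))) ∨
              (ij = ((1 : Fin 2), (0 : Fin 2)) ∧ mn = ((0 : Fin 2), (1 : Fin 2))) then
        -Complex.I
      else 0)

noncomputable def V0 : Matrix (Fin 2 × Fin 2) (Fin 2 × Fin 2) ℂ := fun ij mn =>
    (if ij = mn ∧ (ij = ((0 : Fin 2), (0 : Fin 2)) ∨ ij = ((1 : Fin 2), (1 : Fin 2))) then
        1 + Complex.I
      else if ij = mn ∧ (ij = ((0 : Fin 2), (1 : Fin 2)) ∨ ij = ((1 : Fin 2), (0 : Fin 2))) then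
        1
      else if (ij = ((0 : Fin 2), (1 : Fin 2)) ∧ mn = ((1 : Fin 2), (0 : Fin 2))) ∨
              (ij = ((1 : Fin 2), (0 : Fin 2)) ∧ mn = ((0 : Fin 2), (1 : Fin 2))) then
        Complex.I
      else 0)

/-- `V = U⁻¹ = U*`. -/
noncomputable def Vmat : Matrix (Fin 2 × Fin 2) (Fin 2 × Fin 2) ℂ :=
  ((Real.sqrt 2 : ℝ) : ℂ)⁻¹ • V0

lemma Umat_eq : Umat = ((Real.sqrt 2 : ℝ) : ℂ)⁻¹ • U0 := rfl

noncomputable abbrev e1 : Fin 2 × Fin 2 := ((0 : Fin 2), (0 : Fin 2))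
noncomputable abbrev e2 : Fin 2 × Fin 2 := ((0 : Fin 2), (1 : Fin 2))
noncomputable abbrev e3 : Fin 2 × Fin 2 := ((1 : Fin 2), (0 : Fin 2))
noncomputable abbrev e4 : Fin 2 × Fin 2 := ((1 : Fin 2), (1 : Fin 2))

/-- std basis matrix with entry 1 -/
noncomputable def E (a b : Fin 2 × Fin 2) : Matrix (Fin 2 × Fin 2) (Fin 2 × Fin 2) ℂ :=
  Matrix.single a b 1

noncomputable def G1 : Matrix (Fin 2 × Fin 2) (Fin 2 × Fin 2) ℂ :=
  E e1 e1 + E e1 e2 + E e1 e3 + E e1 e4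
noncomputable def Gx : Matrix (Fin 2 × Fin 2) (Fin 2 × Fin 2) ℂ :=
  E e2 e1 + E e2 e3 + E e3 e1 + E e3 e2
noncomputable def Gy : Matrix (Fin 2 × Fin 2) (Fin 2 × Fin 2) ℂ :=
  E e2 e1 + E e2 e2 - E e3 e1 - E e3 e3
noncomputable def Gr : Matrix (Fin 2 × Fin 2) (Fin 2 × Fin 2) ℂ :=
  E e4 e1

noncomputable def psiM (X : Matrix (Fin 2 × Fin 2) (Fin 2 × Fin 2) ℂ) :
    Matrix (Fin 2 × Fin 2) (Fin 2 × Fin 2) ℂ := Vmat * X * Umat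

/-- the "hat basis" vectors of `W₊`: `ha a = (1-i) • (column a of V)`. -/
noncomputable def ha (a : Fin 2 × Fin 2) : Fin 2 × Fin 2 → ℂ :=
  fun i => (1 - Complex.I) * Vmat i a

/-- the "hat basis" vectors of `W₋`. -/
noncomputable def hb (a : Fin 2 × Fin 2) : Fin 2 × Fin 2 → ℂ :=
  fun i => (1 + Complex.I) * Vmat i a

----------------------------------------------------------------------
-- Basic lemmas
----------------------------------------------------------------------

lemma rt2_sq : (((Real.sqrt 2 : ℝ) : ℂ)) * (((Real.sqrt 2 : ℝ) : ℂ)) = 2 := by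
  norm_cast
  rw [Real.mul_self_sqrt] <;> norm_num

lemma rt2_ne : (((Real.sqrt 2 : ℝ) : ℂ)) ≠ 0 :=
  Complex.ofReal_ne_zero.mpr (by positivity)

lemma U0V0 : U0 * V0 = (2:ℂ) • 1 := by
  ext ⟨i,j⟩ ⟨m,n⟩
  fin_cases i <;> fin_cases j <;> fin_cases m <;> fin_cases n <;>
    simp (config := { decide := true }) [Matrix.mul_apply, Fintype.sum_prod_type,
      Fin.sum_univ_two, U0, V0, Matrix.one_apply] <;> try ring_nf <;>
    try simp [Complex.I_sq] <;> try norm_num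

lemma V0U0 : V0 * U0 = (2:ℂ) • 1 := by
  ext ⟨i,j⟩ ⟨m,n⟩
  fin_cases i <;> fin_cases j <;> fin_cases m <;> fin_cases n <;>
    simp (config := { decide := true }) [Matrix.mul_apply, Fintype.sum_prod_type,
      Fin.sum_univ_two, U0, V0, Matrix.one_apply] <;> try ring_nf <;>
    try simp [Complex.I_sq] <;> try norm_num

lemma half_smul :
    ∀ X : Matrix (Fin 2 × Fin 2) (Fin 2 × Fin 2) ℂ,
    (((Real.sqrt 2 : ℝ) : ℂ))⁻¹ • (((Real.sqrt 2 : ℝ) : ℂ))⁻¹ • (2:ℂ) • X = X := by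
  intro X
  rw [smul_smul, smul_smul, ← mul_inv, rt2_sq]
  norm_num

lemma UV : Umat * Vmat = 1 := by
  rw [Umat_eq, Vmat]
  rw [Matrix.smul_mul, Matrix.mul_smul, U0V0]
  exact half_smul 1

lemma VU : Vmat * Umat = 1 := by
  rw [Umat_eq, Vmat]
  rw [Matrix.smul_mul, Matrix.mul_smul, V0U0]
  exact half_smul 1
lemma Uinv : Umat⁻¹ = Vmat := Matrix.inv_eq_right_inv UV

lemma sandwich (X : Matrix (Fin 2 × Fin 2) (Fin 2 × Fin 2) ℂ) :
    psiM (Umat * X * Vmat) = X := by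
  simp only [psiM, ← Matrix.mul_assoc]
  rw [VU, Matrix.one_mul, Matrix.mul_assoc, VU, Matrix.mul_one]

lemma sandwich' (X : Matrix (Fin 2 × Fin 2) (Fin 2 × Fin 2) ℂ) :
    Umat * (psiM X) * Vmat = X := by
  simp only [psiM, ← Matrix.mul_assoc]
  rw [UV, Matrix.one_mul, Matrix.mul_assoc, UV, Matrix.mul_one]

lemma psiM_mul (X Y : Matrix (Fin 2 × Fin 2) (Fin 2 × Fin 2) ℂ) :
    psiM X * psiM Y = psiM (X * Y) := by
  simp only [psiM, ← Matrix.mul_assoc]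
  rw [Matrix.mul_assoc (Vmat * X), UV, Matrix.mul_one]

----------------------------------------------------------------------
-- pfun facts
----------------------------------------------------------------------

/-- `z1 = e^{2πiλ}`. -/
noncomputable def zc : ℂ := Complex.exp (((2 * Real.pi * lam : ℝ) : ℂ) * Complex.I)

lemma pfun_eq (k : ℝ) : pfun k =
    Complex.exp (((2*Real.pi*k*lam : ℝ) : ℂ) * Complex.I) *
      (1 + Complex.exp (((2*Real.pi*k : ℝ) : ℂ) * Complex.I)
         + Complex.exp (((2*Real.pi*k : ℝ) : ℂ) * Complex.I) ^ 2) := by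
  have h1 : ((2*Real.pi*k*(lam+1) : ℝ) : ℂ) * Complex.I
      = ((2*Real.pi*k*lam : ℝ) : ℂ) * Complex.I + ((2*Real.pi*k : ℝ) : ℂ) * Complex.I := by
    push_cast; ring
  have h2 : ((2*Real.pi*k*(lam+2) : ℝ) : ℂ) * Complex.I
      = ((2*Real.pi*k*lam : ℝ) : ℂ) * Complex.I +
        (((2*Real.pi*k : ℝ) : ℂ) * Complex.I + ((2*Real.pi*k : ℝ) : ℂ) * Complex.I) := by
    push_cast; ring
  unfold pfun
  rw [h1, h2, Complex.exp_add, Complex.exp_add, Complex.exp_add]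
  ring

lemma pfun_zero : pfun 0 = 3 := by
  rw [pfun_eq]
  norm_num

lemma exp_2pi : Complex.exp (((2*Real.pi : ℝ) : ℂ) * Complex.I) = 1 := by
  rw [show (((2*Real.pi : ℝ) : ℂ) * Complex.I) = 2 * (Real.pi : ℂ) * Complex.I by push_cast; ring]
  exact Complex.exp_two_pi_mul_I

lemma pfun_third : pfun (1/3 : ℝ) = 0 := by
  have harg : ((2*Real.pi*(1/3 : ℝ) : ℝ) : ℂ) * Complex.I
      = ((2*Real.pi/3 : ℝ) : ℂ) * Complex.I := by push_cast; ring
  set ω : ℂ := Complex.exp (((2*Real.pi/3 : ℝ) : ℂ) * Complex.I) with hω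
  have hω3 : ω ^ 3 = 1 := by
    rw [hω, ← Complex.exp_nat_mul]
    rw [show ((3:ℕ) : ℂ) * (((2*Real.pi/3 : ℝ) : ℂ) * Complex.I)
        = ((2*Real.pi : ℝ) : ℂ) * Complex.I by push_cast; ring]
    exact exp_2pi
  have hω1 : ω ≠ 1 := by
    rw [hω]
    intro hcon
    rw [Complex.exp_eq_one_iff] at hcon
    obtain ⟨n, hn⟩ := hcon
    have him := congrArg Complex.im hn
    simp [Complex.mul_im, Complex.mul_re] at him
    -- him : 2 * π / 3 = n * (2 * π)
    have hpi := Real.pi_pos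
    have hn3 : (n : ℝ) = 1/3 := by
      field_simp at him ⊢
      nlinarith [him]
    have : (3 * n : ℤ) = 1 := by
      have := congrArg (fun x : ℝ => 3 * x) hn3
      push_cast at this
      norm_num at this
      exact_mod_cast this
    omega
  have hsum : 1 + ω + ω ^ 2 = 0 := by
    have hfac : (ω - 1) * (1 + ω + ω ^ 2) = ω ^ 3 - 1 := by ring
    rw [hω3, sub_self] at hfac
    rcases mul_eq_zero.mp hfac with h | h
    · exact absurd (sub_eq_zero.mp h) hω1
    · exact h
  rw [pfun_eq, harg, hsum, mul_zero]

lemma pfun_one : pfun 1 = 3 * zc := by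
  rw [pfun_eq]
  rw [show ((2*Real.pi*(1:ℝ) : ℝ) : ℂ) * Complex.I = ((2*Real.pi : ℝ) : ℂ) * Complex.I by
    push_cast; ring]
  rw [exp_2pi]
  rw [show ((2*Real.pi*(1:ℝ)*lam : ℝ) : ℂ) * Complex.I = ((2*Real.pi*lam : ℝ) : ℂ) * Complex.I by
    push_cast; ring]
  rw [zc]
  ring

lemma zc_conj : (starRingEnd ℂ) zc = Complex.exp (((-(2*Real.pi*lam) : ℝ) : ℂ) * Complex.I) := by
  rw [zc, ← Complex.exp_conj]
  congr 1
  rw [_root_.map_mul, Complex.conj_ofReal, Complex.conj_I]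
  push_cast
  ring

lemma pfun_neg_one : pfun (-1) = (starRingEnd ℂ) (pfun 1) := by
  rw [pfun_one, pfun_eq]
  rw [show ((2*Real.pi*(-1:ℝ) : ℝ) : ℂ) * Complex.I = ((-(2*Real.pi) : ℝ) : ℂ) * Complex.I by
    push_cast; ring]
  have hexp : Complex.exp (((-(2*Real.pi) : ℝ) : ℂ) * Complex.I) = 1 := by
    have : Complex.exp (((-(2*Real.pi) : ℝ) : ℂ) * Complex.I) *
        Complex.exp (((2*Real.pi : ℝ) : ℂ) * Complex.I) = 1 := by
      rw [← Complex.exp_add]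
      rw [show ((-(2*Real.pi) : ℝ) : ℂ) * Complex.I + ((2*Real.pi : ℝ) : ℂ) * Complex.I = 0 by
        push_cast; ring]
      exact Complex.exp_zero
    rwa [exp_2pi, mul_one] at this
  rw [hexp]
  rw [show ((2*Real.pi*(-1:ℝ)*lam : ℝ) : ℂ) * Complex.I = ((-(2*Real.pi*lam) : ℝ) : ℂ) * Complex.I
    by push_cast; ring]
  rw [_root_.map_mul, ← zc_conj]
  rw [show ((starRingEnd ℂ) (3:ℂ)) = 3 by
    rw [show (3:ℂ) = ((3:ℝ):ℂ) by norm_num, Complex.conj_ofReal]]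
  ring

lemma sqrt13_irr : Irrational (Real.sqrt 13) := by
  have : Nat.Prime 13 := by norm_num
  simpa using this.irrational_sqrt

lemma zc_im : zc.im = Real.sin (2*Real.pi*lam) := by
  rw [zc]; exact Complex.exp_ofReal_mul_I_im _

lemma zc_re : zc.re = Real.cos (2*Real.pi*lam) := by
  rw [zc]; exact Complex.exp_ofReal_mul_I_re _

lemma pfun_one_im : (pfun 1).im = 3 * Real.sin (2*Real.pi*lam) := by
  rw [pfun_one, Complex.mul_im, zc_im, zc_re]
  norm_num

lemma pfun_one_re : (pfun 1).re = 3 * Real.cos (2*Real.pi*lam) := by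
  rw [pfun_one, Complex.mul_re, zc_im, zc_re]
  norm_num

lemma pfun_one_im_ne : (pfun 1).im ≠ 0 := by
  rw [pfun_one_im]
  intro h
  have hs : Real.sin (2*Real.pi*lam) = 0 := by linarith
  rw [Real.sin_eq_zero_iff] at hs
  obtain ⟨n, hn⟩ := hs
  have hpi := Real.pi_ne_zero
  have hlam : (n : ℝ) = 2 * lam := by
    have h2 : (n : ℝ) * Real.pi = 2 * lam * Real.pi := by rw [hn]; ring
    exact mul_right_cancel₀ hpi h2
  have : Real.sqrt 13 = ((n - 1 : ℤ) : ℝ) := by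
    unfold lam at hlam
    push_cast
    linarith
  exact sqrt13_irr.ne_int (n - 1) this

lemma pfun_one_re_ne3 : (pfun 1).re ≠ 3 := by
  rw [pfun_one_re]
  intro h
  have hc : Real.cos (2*Real.pi*lam) = 1 := by linarith
  rw [Real.cos_eq_one_iff] at hc
  obtain ⟨n, hn⟩ := hc
  have hpi := Real.pi_ne_zero
  have hlam : (n : ℝ) = lam := by
    have h2 : (n : ℝ) * (2 * Real.pi) = lam * (2 * Real.pi) := by rw [hn]; ring
    have h2' : Real.pi ≠ 0 := hpi
    have := mul_right_cancel₀ (b := (2 * Real.pi)) (by positivity : (2*Real.pi) ≠ 0) h2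
    exact this
  have : Real.sqrt 13 = ((2*n - 1 : ℤ) : ℝ) := by
    unfold lam at hlam
    push_cast
    linarith
  exact sqrt13_irr.ne_int (2*n - 1) this

lemma pfun_one_re_ne9 : (pfun 1).re ≠ 9 := by
  rw [pfun_one_re]
  have := Real.cos_le_one (2*Real.pi*lam)
  intro h
  linarith

lemma pfun_one_normSq : Complex.normSq (pfun 1) = 9 := by
  rw [pfun_one, _root_.map_mul, zc]
  rw [show Complex.normSq (Complex.exp (((2*Real.pi*lam : ℝ):ℂ) * Complex.I)) = 1 by
    rw [Complex.normSq_eq_norm_sq, Complex.norm_exp_ofReal_mul_I]; norm_num]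
  simp [Complex.normSq_apply]
  norm_num

----------------------------------------------------------------------
-- the key conjugation identity
----------------------------------------------------------------------

set_option maxHeartbeats 1600000 in
lemma hatA0 (k : ℝ) :
    U0 * Amat k * V0 =
      (2:ℂ) • (G1 + (pfun k).re • Gx + (pfun k).im • Gy + Complex.normSq (pfun k) • Gr) := by
  ext ⟨i,j⟩ ⟨m,n⟩
  fin_cases i <;> fin_cases j <;> fin_cases m <;> fin_cases n <;>
    simp (config := { decide := true }) only [Matrix.mul_apply, Fintype.sum_prod_type,
      Fin.sum_univ_two, U0, V0, Amat, Bmat, G1, Gx, Gy, Gr, E, Matrix.single,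
      Matrix.add_apply, Matrix.sub_apply, Matrix.smul_apply, Matrix.of_apply, Matrix.cons_val', Matrix.cons_val_zero,
      Matrix.cons_val_one, Matrix.head_cons, Matrix.head_fin_const, Matrix.empty_val',
      Matrix.cons_val_fin_one, if_true, if_false, and_self, and_true, true_and, or_self,
      ite_true, ite_false, Complex.real_smul, smul_eq_mul] <;>
    (apply Complex.ext) <;>
    simp only [Complex.mul_re, Complex.mul_im, Complex.add_re, Complex.add_im, Complex.sub_re,
      Complex.sub_im, Complex.normSq_apply, Complex.conj_re, Complex.conj_im,
      Complex.I_re, Complex.I_im, Complex.one_re, Complex.one_im, Complex.zero_re,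
      Complex.zero_im, Complex.neg_re, Complex.neg_im,
      Complex.ofReal_re, Complex.ofReal_im, Complex.re_ofNat, Complex.im_ofNat,
      mul_zero, zero_mul, mul_one, one_mul, add_zero, zero_add, sub_zero, zero_sub,
      neg_zero, neg_neg, mul_neg, neg_mul] <;>
    ring

lemma hatA (k : ℝ) :
    Umat * Amat k * Vmat =
      G1 + (pfun k).re • Gx + (pfun k).im • Gy + Complex.normSq (pfun k) • Gr := by
  rw [Umat_eq, Vmat, Matrix.smul_mul, Matrix.smul_mul, Matrix.mul_smul, hatA0]
  exact half_smul _

example : True := trivial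

----------------------------------------------------------------------
-- psiM linearity lemmas
----------------------------------------------------------------------

lemma psiM_add (X Y : Matrix (Fin 2 × Fin 2) (Fin 2 × Fin 2) ℂ) :
    psiM (X + Y) = psiM X + psiM Y := by
  unfold psiM; rw [Matrix.mul_add, Matrix.add_mul]

lemma psiM_sub (X Y : Matrix (Fin 2 × Fin 2) (Fin 2 × Fin 2) ℂ) :
    psiM (X - Y) = psiM X - psiM Y := by
  unfold psiM; rw [Matrix.mul_sub, Matrix.sub_mul]

lemma psiM_smul (r : ℝ) (X : Matrix (Fin 2 × Fin 2) (Fin 2 × Fin 2) ℂ) :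
    psiM (r • X) = r • psiM X := by
  unfold psiM; rw [Matrix.mul_smul, Matrix.smul_mul]

lemma psiM_sum {ι : Type*} (s : Finset ι) (f : ι → Matrix (Fin 2 × Fin 2) (Fin 2 × Fin 2) ℂ) :
    psiM (∑ i ∈ s, f i) = ∑ i ∈ s, psiM (f i) := by
  unfold psiM; rw [Matrix.mul_sum, Matrix.sum_mul]

----------------------------------------------------------------------
-- the real subalgebra and F
----------------------------------------------------------------------

noncomputable def cphi : Matrix (Fin 2 × Fin 2) (Fin 2 × Fin 2) ℂ →ₐ[ℝ]
    Matrix (Fin 2 × Fin 2) (Fin 2 × Fin 2) ℂ where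
  toFun X := Umat * X * Vmat
  map_one' := by show Umat * 1 * Vmat = 1; rw [Matrix.mul_one]; exact UV
  map_mul' X Y := by
    show Umat * (X * Y) * Vmat = (Umat * X * Vmat) * (Umat * Y * Vmat)
    calc Umat * (X * Y) * Vmat
        = Umat * (X * ((Vmat * Umat) * Y)) * Vmat := by rw [VU, Matrix.one_mul]
      _ = Umat * X * Vmat * (Umat * Y * Vmat) := by simp only [Matrix.mul_assoc]
  map_zero' := by show Umat * 0 * Vmat = 0; simp
  map_add' X Y := by
    show Umat * (X + Y) * Vmat = Umat * X * Vmat + Umat * Y * Vmat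
    rw [Matrix.mul_add, Matrix.add_mul]
  commutes' r := by
    show Umat * (algebraMap ℝ _ r) * Vmat = algebraMap ℝ _ r
    rw [Algebra.algebraMap_eq_smul_one, Matrix.mul_smul, Matrix.mul_one, Matrix.smul_mul, UV]

noncomputable def Rsub : Subalgebra ℝ (Matrix (Fin 2 × Fin 2) (Fin 2 × Fin 2) ℂ) where
  carrier := {Y | ∀ i j, (Y i j).im = 0}
  mul_mem' := by
    intro X Y hX hY i j
    rw [Matrix.mul_apply, Complex.im_sum]
    apply Finset.sum_eq_zero
    intro c _
    rw [Complex.mul_im, hX, hY, mul_zero, zero_mul, add_zero]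
  one_mem' := by
    intro i j
    rw [Matrix.one_apply]
    split <;> simp
  add_mem' := by
    intro X Y hX hY i j
    rw [Matrix.add_apply, Complex.add_im, hX, hY, add_zero]
  zero_mem' := by intro i j; simp
  algebraMap_mem' := by
    intro r i j
    rw [Algebra.algebraMap_eq_smul_one, Matrix.smul_apply, Matrix.one_apply]
    split <;> simp

noncomputable def Fsub : Subalgebra ℝ (Matrix (Fin 2 × Fin 2) (Fin 2 × Fin 2) ℂ) :=
  Rsub.comap cphi

lemma G_im (i j : Fin 2 × Fin 2) (x y r : ℝ) :
    ((G1 + x • Gx + y • Gy + r • Gr) i j).im = 0 := by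
  fin_cases i <;> fin_cases j <;>
    simp (config := { decide := true }) only [G1, Gx, Gy, Gr, E, Matrix.single,
      Matrix.add_apply, Matrix.sub_apply, Matrix.smul_apply, Matrix.of_apply,
      if_true, if_false, and_self, and_true, true_and, or_self, ite_true, ite_false,
      Complex.real_smul, smul_eq_mul] <;>
    simp [Complex.add_im, Complex.sub_im, Complex.mul_im]

lemma calA_le_Fsub : calA ≤ Fsub := by
  apply Algebra.adjoin_le
  rintro _ ⟨k, rfl⟩
  intro i j
  show ((Umat * Amat k * Vmat) i j).im = 0
  rw [hatA]
  exact G_im i j _ _ _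

lemma Amem (k : ℝ) : Amat k ∈ calA := Algebra.subset_adjoin ⟨k, rfl⟩

----------------------------------------------------------------------
-- specializations of hatA
----------------------------------------------------------------------

lemma hat13 : Umat * Amat (1/3 : ℝ) * Vmat = G1 := by
  rw [hatA, pfun_third]
  simp

lemma hat0 : Umat * Amat 0 * Vmat = G1 + (3:ℝ) • Gx + (9:ℝ) • Gr := by
  rw [hatA, pfun_zero]
  rw [show ((3:ℂ)).re = (3:ℝ) by norm_num, show ((3:ℂ)).im = (0:ℝ) by norm_num,
    show Complex.normSq 3 = (9:ℝ) by rw [Complex.normSq_apply]; norm_num]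
  module

lemma hat1 : Umat * Amat 1 * Vmat
    = G1 + (pfun 1).re • Gx + (pfun 1).im • Gy + (9:ℝ) • Gr := by
  rw [hatA, pfun_one_normSq]

lemma hatm1 : Umat * Amat (-1) * Vmat
    = G1 + (pfun 1).re • Gx + (-(pfun 1).im) • Gy + (9:ℝ) • Gr := by
  rw [hatA, pfun_neg_one]
  rw [Complex.conj_re, Complex.conj_im, Complex.normSq_conj, pfun_one_normSq]

----------------------------------------------------------------------
-- psiM images of the generators G1, Gx, Gy, Gr are in calA
----------------------------------------------------------------------

lemma psiG1_mem : psiM G1 ∈ calA := by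
  rw [← hat13, sandwich]
  exact Amem _

lemma psiGy_mem : psiM Gy ∈ calA := by
  have hy := pfun_one_im_ne
  have e : Umat * (Amat 1 - Amat (-1)) * Vmat = (2 * (pfun 1).im) • Gy := by
    rw [Matrix.mul_sub, Matrix.sub_mul, hat1, hatm1]
    module
  have eGy : Gy = (2 * (pfun 1).im)⁻¹ • (Umat * (Amat 1 - Amat (-1)) * Vmat) := by
    rw [e, smul_smul, inv_mul_cancel₀ (by simpa using hy), one_smul]
  rw [eGy, psiM_smul, sandwich]
  exact Subalgebra.smul_mem _ (sub_mem (Amem 1) (Amem (-1))) _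

lemma psiGx_mem : psiM Gx ∈ calA := by
  have hx := pfun_one_re_ne3
  have e : Umat * ((2:ℝ) • (Amat 0 - Amat (1/3:ℝ)) -
      (Amat 1 + Amat (-1) - (2:ℝ) • Amat (1/3:ℝ))) * Vmat
      = (6 - 2 * (pfun 1).re) • Gx := by
    simp only [Matrix.mul_sub, Matrix.sub_mul, Matrix.mul_add, Matrix.add_mul,
      Matrix.mul_smul, Matrix.smul_mul]
    rw [hat0, hat13, hat1, hatm1]
    module
  have eGx : Gx = (6 - 2 * (pfun 1).re)⁻¹ • (Umat * ((2:ℝ) • (Amat 0 - Amat (1/3:ℝ)) -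
      (Amat 1 + Amat (-1) - (2:ℝ) • Amat (1/3:ℝ))) * Vmat) := by
    rw [e, smul_smul, inv_mul_cancel₀ (by intro hc; apply hx; linarith), one_smul]
  rw [eGx, psiM_smul, sandwich]
  exact Subalgebra.smul_mem _
    (sub_mem (Subalgebra.smul_mem _ (sub_mem (Amem 0) (Amem _)) _)
      (sub_mem (add_mem (Amem 1) (Amem (-1))) (Subalgebra.smul_mem _ (Amem _) _))) _

lemma psiGr_mem : psiM Gr ∈ calA := by
  have hx := pfun_one_re_ne3
  have e : Umat * ((2 * (pfun 1).re) • (Amat 0 - Amat (1/3:ℝ)) -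
      (3:ℝ) • (Amat 1 + Amat (-1) - (2:ℝ) • Amat (1/3:ℝ))) * Vmat
      = (18 * (pfun 1).re - 54) • Gr := by
    simp only [Matrix.mul_sub, Matrix.sub_mul, Matrix.mul_add, Matrix.add_mul,
      Matrix.mul_smul, Matrix.smul_mul]
    rw [hat0, hat13, hat1, hatm1]
    module
  have eGr : Gr = (18 * (pfun 1).re - 54)⁻¹ • (Umat * ((2 * (pfun 1).re) • (Amat 0 - Amat (1/3:ℝ)) -
      (3:ℝ) • (Amat 1 + Amat (-1) - (2:ℝ) • Amat (1/3:ℝ))) * Vmat) := by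
    rw [e, smul_smul, inv_mul_cancel₀ (by intro hc; apply hx; linarith), one_smul]
  rw [eGr, psiM_smul, sandwich]
  exact Subalgebra.smul_mem _
    (sub_mem (Subalgebra.smul_mem _ (sub_mem (Amem 0) (Amem _)) _)
      (Subalgebra.smul_mem _ (sub_mem (add_mem (Amem 1) (Amem (-1))) (Subalgebra.smul_mem _ (Amem _) _)) _)) _

----------------------------------------------------------------------
-- generation of all matrix units
----------------------------------------------------------------------

lemma m1 : G1 * Gr = E e1 e1 := by
  ext ⟨i,j⟩ ⟨m,n⟩
  fin_cases i <;> fin_cases j <;> fin_cases m <;> fin_cases n <;>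
    simp (config := { decide := true }) [Matrix.mul_apply, Fintype.sum_prod_type,
      Fin.sum_univ_two, G1, Gx, Gy, Gr, E, Matrix.single, Matrix.add_apply,
      Matrix.sub_apply, Matrix.of_apply]

lemma m2 : Gx * E e1 e1 + Gy * E e1 e1 = (2:ℝ) • E e2 e1 := by
  ext ⟨i,j⟩ ⟨m,n⟩
  fin_cases i <;> fin_cases j <;> fin_cases m <;> fin_cases n <;>
    simp (config := { decide := true }) only [Matrix.mul_apply, Fintype.sum_prod_type,
      Fin.sum_univ_two, G1, Gx, Gy, Gr, E, Matrix.single, Matrix.add_apply,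
      Matrix.sub_apply, Matrix.smul_apply, Matrix.of_apply,
      if_true, if_false, and_self, and_true, true_and, or_self, ite_true, ite_false,
      Complex.real_smul, smul_eq_mul] <;>
    norm_num

lemma m3 : Gx * E e1 e1 - Gy * E e1 e1 = (2:ℝ) • E e3 e1 := by
  ext ⟨i,j⟩ ⟨m,n⟩
  fin_cases i <;> fin_cases j <;> fin_cases m <;> fin_cases n <;>
    simp (config := { decide := true }) only [Matrix.mul_apply, Fintype.sum_prod_type,
      Fin.sum_univ_two, G1, Gx, Gy, Gr, E, Matrix.single, Matrix.add_apply,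
      Matrix.sub_apply, Matrix.smul_apply, Matrix.of_apply,
      if_true, if_false, and_self, and_true, true_and, or_self, ite_true, ite_false,
      Complex.real_smul, smul_eq_mul] <;>
    norm_num

lemma m4 : (G1 - E e1 e1) * Gx - (2:ℝ) • E e1 e1 + (G1 - E e1 e1) * Gy = (2:ℝ) • E e1 e2 := by
  ext ⟨i,j⟩ ⟨m,n⟩
  fin_cases i <;> fin_cases j <;> fin_cases m <;> fin_cases n <;>
    simp (config := { decide := true }) only [Matrix.mul_apply, Fintype.sum_prod_type,
      Fin.sum_univ_two, G1, Gx, Gy, Gr, E, Matrix.single, Matrix.add_apply,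
      Matrix.sub_apply, Matrix.smul_apply, Matrix.of_apply,
      if_true, if_false, and_self, and_true, true_and, or_self, ite_true, ite_false,
      Complex.real_smul, smul_eq_mul] <;>
    norm_num

lemma m5 : (G1 - E e1 e1) * Gx - (2:ℝ) • E e1 e1 - (G1 - E e1 e1) * Gy = (2:ℝ) • E e1 e3 := by
  ext ⟨i,j⟩ ⟨m,n⟩
  fin_cases i <;> fin_cases j <;> fin_cases m <;> fin_cases n <;>
    simp (config := { decide := true }) only [Matrix.mul_apply, Fintype.sum_prod_type,
      Fin.sum_univ_two, G1, Gx, Gy, Gr, E, Matrix.single, Matrix.add_apply,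
      Matrix.sub_apply, Matrix.smul_apply, Matrix.of_apply,
      if_true, if_false, and_self, and_true, true_and, or_self, ite_true, ite_false,
      Complex.real_smul, smul_eq_mul] <;>
    norm_num

lemma m6 : G1 - E e1 e1 - E e1 e2 - E e1 e3 = E e1 e4 := by
  rw [G1]
  abel

lemma m7 (a b : Fin 2 × Fin 2) : E a e1 * E e1 b = E a b := by
  rw [E, E, E, Matrix.single_mul_single_same, mul_one]

lemma half_cancel (X : Matrix (Fin 2 × Fin 2) (Fin 2 × Fin 2) ℂ)
    (h : (2:ℝ) • X ∈ calA) : X ∈ calA := by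
  have := Subalgebra.smul_mem calA h ((2:ℝ)⁻¹)
  rwa [smul_smul, inv_mul_cancel₀ (by norm_num), one_smul] at this

lemma psiE11_mem : psiM (E e1 e1) ∈ calA := by
  have h := mul_mem psiG1_mem psiGr_mem
  rwa [psiM_mul, m1] at h

lemma psiE21_mem : psiM (E e2 e1) ∈ calA := by
  apply half_cancel
  rw [← psiM_smul, ← m2, psiM_add, ← psiM_mul, ← psiM_mul]
  exact add_mem (mul_mem psiGx_mem psiE11_mem) (mul_mem psiGy_mem psiE11_mem)

lemma psiE31_mem : psiM (E e3 e1) ∈ calA := by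
  apply half_cancel
  rw [← psiM_smul, ← m3, psiM_sub, ← psiM_mul, ← psiM_mul]
  exact sub_mem (mul_mem psiGx_mem psiE11_mem) (mul_mem psiGy_mem psiE11_mem)

lemma psiE12_mem : psiM (E e1 e2) ∈ calA := by
  apply half_cancel
  rw [← psiM_smul, ← m4, psiM_add, psiM_sub, psiM_smul, ← psiM_mul, ← psiM_mul, psiM_sub]
  exact add_mem (sub_mem (mul_mem (sub_mem psiG1_mem psiE11_mem) psiGx_mem)
    (Subalgebra.smul_mem _ psiE11_mem _)) (mul_mem (sub_mem psiG1_mem psiE11_mem) psiGy_mem)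

lemma psiE13_mem : psiM (E e1 e3) ∈ calA := by
  apply half_cancel
  rw [← psiM_smul, ← m5, psiM_sub, psiM_sub, psiM_smul, ← psiM_mul, ← psiM_mul, psiM_sub]
  exact sub_mem (sub_mem (mul_mem (sub_mem psiG1_mem psiE11_mem) psiGx_mem)
    (Subalgebra.smul_mem _ psiE11_mem _)) (mul_mem (sub_mem psiG1_mem psiE11_mem) psiGy_mem)

lemma psiE14_mem : psiM (E e1 e4) ∈ calA := by
  rw [← m6, psiM_sub, psiM_sub, psiM_sub]
  exact sub_mem (sub_mem (sub_mem psiG1_mem psiE11_mem) psiE12_mem) psiE13_mem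

lemma psiE41_mem : psiM (E e4 e1) ∈ calA := psiGr_mem

lemma psiEa1_mem (a : Fin 2 × Fin 2) : psiM (E a e1) ∈ calA := by
  obtain ⟨i, j⟩ := a
  fin_cases i <;> fin_cases j
  · exact psiE11_mem
  · exact psiE21_mem
  · exact psiE31_mem
  · exact psiE41_mem

lemma psiE1b_mem (b : Fin 2 × Fin 2) : psiM (E e1 b) ∈ calA := by
  obtain ⟨i, j⟩ := b
  fin_cases i <;> fin_cases j
  · exact psiE11_mem
  · exact psiE12_mem
  · exact psiE13_mem
  · exact psiE14_mem

lemma psiE_mem (a b : Fin 2 × Fin 2) : psiM (E a b) ∈ calA := by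
  rw [← m7 a b, ← psiM_mul]
  exact mul_mem (psiEa1_mem a) (psiE1b_mem b)

lemma real_mem_psi (Y : Matrix (Fin 2 × Fin 2) (Fin 2 × Fin 2) ℂ)
    (hY : ∀ i j, (Y i j).im = 0) : psiM Y ∈ calA := by
  have hYe : Y = ∑ i : Fin 2 × Fin 2, ∑ j : Fin 2 × Fin 2, (Y i j).re • E i j := by
    conv_lhs => rw [Matrix.matrix_eq_sum_single Y]
    apply Finset.sum_congr rfl
    intro i _
    apply Finset.sum_congr rfl
    intro j _
    have hij : (Y i j).re • (1:ℂ) = Y i j := by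
      rw [Complex.real_smul, mul_one]
      exact Complex.ext (by simp) (by simp [hY i j])
    rw [E, Matrix.smul_single, hij]
  rw [hYe, psiM_sum]
  apply sum_mem
  intro i _
  rw [psiM_sum]
  apply sum_mem
  intro j _
  rw [psiM_smul]
  exact Subalgebra.smul_mem _ (psiE_mem i j) _

----------------------------------------------------------------------
-- image equality and finrank of calA
----------------------------------------------------------------------

lemma image_eq :
    ((fun X => Umat * X * Umat⁻¹) ''
        (calA : Set (Matrix (Fin 2 × Fin 2) (Fin 2 × Fin 2) ℂ))) =
      {Y : Matrix (Fin 2 × Fin 2) (Fin 2 × Fin 2) ℂ | ∀ ij mn, (Y ij mn).im = 0} := by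
  ext Y
  constructor
  · rintro ⟨X, hX, rfl⟩
    intro i j
    show ((Umat * X * Umat⁻¹) i j).im = 0
    rw [Uinv]
    exact (calA_le_Fsub hX) i j
  · intro hY
    exact ⟨psiM Y, real_mem_psi Y hY, by show Umat * psiM Y * Umat⁻¹ = Y; rw [Uinv]; exact sandwich' Y⟩

noncomputable def calA_equiv : ↥calA ≃ₗ[ℝ] Matrix (Fin 2 × Fin 2) (Fin 2 × Fin 2) ℝ where
  toFun X := fun i j => ((Umat * (X : Matrix (Fin 2 × Fin 2) (Fin 2 × Fin 2) ℂ) * Vmat) i j).re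
  map_add' X Y := by
    funext i j
    show ((Umat * ((X : Matrix (Fin 2 × Fin 2) (Fin 2 × Fin 2) ℂ) + Y) * Vmat) i j).re = _
    rw [Matrix.mul_add, Matrix.add_mul, Matrix.add_apply, Complex.add_re]
    rfl
  map_smul' r X := by
    funext i j
    show ((Umat * (r • (X : Matrix (Fin 2 × Fin 2) (Fin 2 × Fin 2) ℂ)) * Vmat) i j).re = _
    rw [Matrix.mul_smul, Matrix.smul_mul, Matrix.smul_apply]
    rw [Complex.real_smul, Complex.mul_re]
    simp
    rfl
  invFun M := ⟨psiM (M.map (fun r => (r : ℂ))),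
    real_mem_psi _ (by intro i j; simp [Matrix.map_apply])⟩
  left_inv X := by
    apply Subtype.ext
    show psiM _ = (X : Matrix (Fin 2 × Fin 2) (Fin 2 × Fin 2) ℂ)
    have hX : ∀ i j, ((Umat * (X : Matrix (Fin 2 × Fin 2) (Fin 2 × Fin 2) ℂ) * Vmat) i j).im = 0 :=
      calA_le_Fsub X.2
    have hmap : (Matrix.map
        (fun i j => ((Umat * (X : Matrix (Fin 2 × Fin 2) (Fin 2 × Fin 2) ℂ) * Vmat) i j).re)
        (fun r => (r : ℂ)))
        = Umat * (X : Matrix (Fin 2 × Fin 2) (Fin 2 × Fin 2) ℂ) * Vmat := by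
      ext i j
      show (((Umat * (X : Matrix (Fin 2 × Fin 2) (Fin 2 × Fin 2) ℂ) * Vmat) i j).re : ℂ) = _
      exact Complex.ext (by simp) (by simp [hX i j])
    rw [hmap, sandwich]
  right_inv M := by
    funext i j
    show ((Umat * psiM (M.map (fun r => (r : ℂ))) * Vmat) i j).re = M i j
    rw [sandwich']
    simp [Matrix.map_apply]

lemma finrank_calA : Module.finrank ℝ calA = 16 := by
  rw [calA_equiv.finrank_eq, Module.finrank_matrix]
  simp [Fintype.card_prod]

----------------------------------------------------------------------
-- part 1: C commutes with A(k)
----------------------------------------------------------------------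

lemma C1 (k : ℝ) (w : Fin 2 × Fin 2 → ℂ) :
    Cmap ((Amat k).mulVec w) = (Amat k).mulVec (Cmap w) := by
  funext ij
  show (starRingEnd ℂ) (((Amat k).mulVec w) (ij.2, ij.1)) = _
  rw [Matrix.mulVec, Matrix.mulVec, dotProduct, dotProduct, _root_.map_sum]
  apply Fintype.sum_equiv (Equiv.prodComm (Fin 2) (Fin 2))
  intro x
  show (starRingEnd ℂ) (Amat k (ij.2, ij.1) x * w x)
      = Amat k ij (x.2, x.1) * Cmap w (x.2, x.1)
  show (starRingEnd ℂ) (Amat k (ij.2, ij.1) x * w x)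
      = Amat k ij (x.2, x.1) * (starRingEnd ℂ) (w (x.1, x.2))
  rw [_root_.map_mul]
  rw [show Amat k (ij.2, ij.1) x = Bmat k ij.2 x.1 * (starRingEnd ℂ) (Bmat k ij.1 x.2) from rfl]
  rw [show Amat k ij (x.2, x.1) = Bmat k ij.1 x.2 * (starRingEnd ℂ) (Bmat k ij.2 x.1) from rfl]
  rw [_root_.map_mul, RingHomInvPair.comp_apply_eq]
  ring

lemma mem_Wplus {w : Fin 2 × Fin 2 → ℂ} : w ∈ Wplus ↔ Cmap w = w := by
  rw [Wplus, LinearMap.mem_ker, LinearMap.sub_apply, LinearMap.id_apply, sub_eq_zero]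

lemma mem_Wminus {w : Fin 2 × Fin 2 → ℂ} : w ∈ Wminus ↔ Cmap w = -w := by
  rw [Wminus, LinearMap.mem_ker, LinearMap.add_apply, LinearMap.id_apply,
    add_eq_zero_iff_eq_neg]

----------------------------------------------------------------------
-- hat coordinates of C
----------------------------------------------------------------------

lemma Cmap_hat (w : Fin 2 × Fin 2 → ℂ) (a : Fin 2 × Fin 2) :
    (Umat.mulVec (Cmap w)) a = -Complex.I * (starRingEnd ℂ) ((Umat.mulVec w) a) := by
  obtain ⟨i, j⟩ := a
  fin_cases i <;> fin_cases j <;>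
    simp (config := { decide := true }) only [Matrix.mulVec, dotProduct,
      Fintype.sum_prod_type, Fin.sum_univ_two, Umat, Cmap, LinearMap.coe_mk, AddHom.coe_mk,
      if_true, if_false, and_self, and_true, true_and, or_self, ite_true, ite_false] <;>
    simp only [_root_.map_add, _root_.map_mul, _root_.map_sub, _root_.map_one, _root_.map_zero, map_inv₀, mul_zero, zero_mul,
      add_zero, zero_add, _root_.map_neg, Complex.conj_ofReal, Complex.conj_I,
      RingHomInvPair.comp_apply_eq] <;>
    ring_nf <;> try simp [Complex.I_sq] <;> try ring

lemma Uha (a : Fin 2 × Fin 2) :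
    Umat.mulVec (ha a) = fun c => (1 - Complex.I) * (if c = a then 1 else 0) := by
  funext c
  rw [Matrix.mulVec, dotProduct]
  have h : ∀ i, Umat c i * ((1 - Complex.I) * Vmat i a)
      = (1 - Complex.I) * (Umat c i * Vmat i a) := fun i => by ring
  calc ∑ i, Umat c i * ha a i = ∑ i, (1 - Complex.I) * (Umat c i * Vmat i a) :=
        Finset.sum_congr rfl (fun i _ => h i)
    _ = (1 - Complex.I) * ∑ i, Umat c i * Vmat i a := by rw [Finset.mul_sum]
    _ = (1 - Complex.I) * (Umat * Vmat) c a := by rw [Matrix.mul_apply]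
    _ = (1 - Complex.I) * (if c = a then 1 else 0) := by rw [UV, Matrix.one_apply]

lemma Uhb (a : Fin 2 × Fin 2) :
    Umat.mulVec (hb a) = fun c => (1 + Complex.I) * (if c = a then 1 else 0) := by
  funext c
  rw [Matrix.mulVec, dotProduct]
  have h : ∀ i, Umat c i * ((1 + Complex.I) * Vmat i a)
      = (1 + Complex.I) * (Umat c i * Vmat i a) := fun i => by ring
  calc ∑ i, Umat c i * hb a i = ∑ i, (1 + Complex.I) * (Umat c i * Vmat i a) :=
        Finset.sum_congr rfl (fun i _ => h i)
    _ = (1 + Complex.I) * ∑ i, Umat c i * Vmat i a := by rw [Finset.mul_sum]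
    _ = (1 + Complex.I) * (Umat * Vmat) c a := by rw [Matrix.mul_apply]
    _ = (1 + Complex.I) * (if c = a then 1 else 0) := by rw [UV, Matrix.one_apply]

lemma mulVec_sum {ι : Type*} (s : Finset ι) (A : Matrix (Fin 2 × Fin 2) (Fin 2 × Fin 2) ℂ)
    (f : ι → (Fin 2 × Fin 2 → ℂ)) :
    A.mulVec (∑ i ∈ s, f i) = ∑ i ∈ s, A.mulVec (f i) := by
  funext c
  rw [Finset.sum_apply, Matrix.mulVec, dotProduct]
  simp only [Finset.sum_apply, Finset.mul_sum]
  rw [Finset.sum_comm]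
  apply Finset.sum_congr rfl
  intro i _
  rw [Matrix.mulVec, dotProduct]

lemma reflect_plus {z : ℂ} (h : z = -Complex.I * (starRingEnd ℂ) z) :
    z = (((z * ((1 + Complex.I)/2)).re : ℝ) : ℂ) * (1 - Complex.I) := by
  have hre := congrArg Complex.re h
  have him := congrArg Complex.im h
  simp [Complex.mul_re, Complex.mul_im] at hre him
  apply Complex.ext <;>
    simp [Complex.mul_re, Complex.mul_im, Complex.add_re, Complex.add_im,
      Complex.div_re, Complex.div_im, Complex.normSq_apply] <;>
    nlinarith [hre, him]

lemma reflect_minus {z : ℂ} (h : z = Complex.I * (starRingEnd ℂ) z) :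
    z = (((z * ((1 - Complex.I)/2)).re : ℝ) : ℂ) * (1 + Complex.I) := by
  have hre := congrArg Complex.re h
  have him := congrArg Complex.im h
  simp [Complex.mul_re, Complex.mul_im] at hre him
  apply Complex.ext <;>
    simp [Complex.mul_re, Complex.mul_im, Complex.add_re, Complex.add_im,
      Complex.div_re, Complex.div_im, Complex.normSq_apply] <;>
    nlinarith [hre, him]

lemma w_eq (w : Fin 2 × Fin 2 → ℂ) : w = Vmat.mulVec (Umat.mulVec w) := by
  rw [Matrix.mulVec_mulVec, VU, Matrix.one_mulVec]

lemma hv_plus {w : Fin 2 × Fin 2 → ℂ} (hw : Cmap w = w) (a : Fin 2 × Fin 2) :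
    (Umat.mulVec w) a = -Complex.I * (starRingEnd ℂ) ((Umat.mulVec w) a) := by
  conv_lhs => rw [← hw]
  exact Cmap_hat w a

lemma hv_minus {w : Fin 2 × Fin 2 → ℂ} (hw : Cmap w = -w) (a : Fin 2 × Fin 2) :
    (Umat.mulVec w) a = Complex.I * (starRingEnd ℂ) ((Umat.mulVec w) a) := by
  have h := Cmap_hat w a
  rw [hw, Matrix.mulVec_neg] at h
  rw [Pi.neg_apply] at h
  linear_combination (-1 : ℂ) * h

lemma decomp_plus {w : Fin 2 × Fin 2 → ℂ} (hw : Cmap w = w) :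
    w = ∑ a : Fin 2 × Fin 2, ((Umat.mulVec w) a * ((1 + Complex.I)/2)).re • ha a := by
  funext i
  rw [Finset.sum_apply]
  conv_lhs => rw [w_eq w]
  rw [Matrix.mulVec, dotProduct]
  apply Finset.sum_congr rfl
  intro a _
  rw [Pi.smul_apply]
  show Vmat i a * (Umat.mulVec w) a = _ • (ha a i)
  show Vmat i a * (Umat.mulVec w) a
      = ((Umat.mulVec w) a * ((1 + Complex.I)/2)).re • ((1 - Complex.I) * Vmat i a)
  conv_lhs => rw [reflect_plus (hv_plus hw a)]
  rw [Complex.real_smul]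
  ring

lemma decomp_minus {w : Fin 2 × Fin 2 → ℂ} (hw : Cmap w = -w) :
    w = ∑ a : Fin 2 × Fin 2, ((Umat.mulVec w) a * ((1 - Complex.I)/2)).re • hb a := by
  funext i
  rw [Finset.sum_apply]
  conv_lhs => rw [w_eq w]
  rw [Matrix.mulVec, dotProduct]
  apply Finset.sum_congr rfl
  intro a _
  rw [Pi.smul_apply]
  show Vmat i a * (Umat.mulVec w) a
      = ((Umat.mulVec w) a * ((1 - Complex.I)/2)).re • ((1 + Complex.I) * Vmat i a)
  conv_lhs => rw [reflect_minus (hv_minus hw a)]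
  rw [Complex.real_smul]
  ring

lemma ha_mem (a : Fin 2 × Fin 2) : ha a ∈ Wplus := by
  rw [mem_Wplus]
  funext x
  show (starRingEnd ℂ) (ha a (x.2, x.1)) = ha a x
  obtain ⟨b, c⟩ := a
  obtain ⟨i, j⟩ := x
  fin_cases b <;> fin_cases c <;> fin_cases i <;> fin_cases j <;>
    simp (config := { decide := true }) only [ha, Vmat, V0, Matrix.smul_apply, smul_eq_mul,
      if_true, if_false, and_self, and_true, true_and, or_self, ite_true, ite_false] <;>
    simp only [_root_.map_add, _root_.map_mul, _root_.map_sub, _root_.map_one, _root_.map_zero, map_inv₀, mul_zero, zero_mul,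
      add_zero, zero_add, _root_.map_neg, Complex.conj_ofReal, Complex.conj_I] <;>
    ring_nf <;> try simp [Complex.I_sq] <;> try ring

lemma hb_mem (a : Fin 2 × Fin 2) : hb a ∈ Wminus := by
  rw [mem_Wminus]
  funext x
  show (starRingEnd ℂ) (hb a (x.2, x.1)) = -(hb a x)
  obtain ⟨b, c⟩ := a
  obtain ⟨i, j⟩ := x
  fin_cases b <;> fin_cases c <;> fin_cases i <;> fin_cases j <;>
    simp (config := { decide := true }) only [hb, Vmat, V0, Matrix.smul_apply, smul_eq_mul,
      if_true, if_false, and_self, and_true, true_and, or_self, ite_true, ite_false] <;>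
    simp only [_root_.map_add, _root_.map_mul, _root_.map_sub, _root_.map_one, _root_.map_zero, map_inv₀, mul_zero, zero_mul,
      add_zero, zero_add, _root_.map_neg, Complex.conj_ofReal, Complex.conj_I] <;>
    ring_nf <;> try simp [Complex.I_sq] <;> try ring

----------------------------------------------------------------------
-- action of matrix units
----------------------------------------------------------------------

lemma one_minus_mul : (1 - Complex.I) * ((1 + Complex.I)/2) = 1 := by
  linear_combination (-(1:ℂ)/2) * Complex.I_sq

lemma one_plus_mul : (1 + Complex.I) * ((1 - Complex.I)/2) = 1 := by
  linear_combination (-(1:ℂ)/2) * Complex.I_sq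

lemma psiE_mulVec (a b : Fin 2 × Fin 2) (w : Fin 2 × Fin 2 → ℂ) :
    (psiM (E a b)).mulVec w = ((Umat.mulVec w) b) • (fun i => Vmat i a) := by
  rw [show psiM (E a b) = Vmat * (E a b * Umat) by rw [psiM, Matrix.mul_assoc],
    ← Matrix.mulVec_mulVec, ← Matrix.mulVec_mulVec]
  have h1 : (E a b).mulVec (Umat.mulVec w)
      = fun c => if c = a then (Umat.mulVec w) b else 0 := by
    funext c
    rw [Matrix.mulVec, dotProduct]
    by_cases hc : c = a
    · simp [E, Matrix.single, hc, ite_mul, Finset.sum_ite_eq]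
    · have hac : ¬ (a = c) := fun h => hc h.symm
      simp [E, Matrix.single, hc, hac]
  rw [h1]
  funext i
  rw [Matrix.mulVec, dotProduct]
  simp only [mul_ite, mul_zero, Finset.sum_ite_eq', Finset.mem_univ, if_true]
  rw [Pi.smul_apply, smul_eq_mul]
  ring

----------------------------------------------------------------------
-- linear equivalences for W± and finranks
----------------------------------------------------------------------

noncomputable def wplus_equiv : ↥Wplus ≃ₗ[ℝ] (Fin 2 × Fin 2 → ℝ) where
  toFun w := fun a => ((Umat.mulVec (w : Fin 2 × Fin 2 → ℂ)) a * ((1 + Complex.I)/2)).re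
  map_add' x y := by
    funext a
    show ((Umat.mulVec ((x : Fin 2 × Fin 2 → ℂ) + (y : Fin 2 × Fin 2 → ℂ))) a * _).re = _
    rw [Matrix.mulVec_add, Pi.add_apply, add_mul, Complex.add_re]
    rfl
  map_smul' r x := by
    funext a
    show ((Umat.mulVec (r • (x : Fin 2 × Fin 2 → ℂ))) a * _).re = _
    rw [Matrix.mulVec_smul, Pi.smul_apply, smul_mul_assoc, Complex.real_smul, Complex.mul_re]
    simp
  invFun g := ⟨∑ a : Fin 2 × Fin 2, g a • ha a,
    sum_mem (fun a _ => Submodule.smul_mem _ _ (ha_mem a))⟩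
  left_inv x := by
    apply Subtype.ext
    show ∑ a : Fin 2 × Fin 2, ((Umat.mulVec (x : Fin 2 × Fin 2 → ℂ)) a * ((1 + Complex.I)/2)).re • ha a = (x : Fin 2 × Fin 2 → ℂ)
    exact (decomp_plus (mem_Wplus.mp x.2)).symm
  right_inv g := by
    funext b
    show ((Umat.mulVec (∑ a : Fin 2 × Fin 2, g a • ha a)) b * ((1 + Complex.I)/2)).re = g b
    rw [_root_.mulVec_sum]
    rw [Finset.sum_congr rfl (fun a _ => Matrix.mulVec_smul Umat (g a) (ha a))]
    rw [Finset.sum_apply]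
    simp only [Pi.smul_apply, Uha]
    rw [Finset.sum_congr rfl (fun a _ => by
      show g a • ((1 - Complex.I) * (if b = a then 1 else 0)) = if b = a then g a • (1 - Complex.I) else 0
      split <;> simp)]
    rw [Finset.sum_ite_eq, if_pos (Finset.mem_univ b)]
    rw [smul_mul_assoc, one_minus_mul, Complex.real_smul, mul_one, Complex.ofReal_re]

noncomputable def wminus_equiv : ↥Wminus ≃ₗ[ℝ] (Fin 2 × Fin 2 → ℝ) where
  toFun w := fun a => ((Umat.mulVec (w : Fin 2 × Fin 2 → ℂ)) a * ((1 - Complex.I)/2)).re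
  map_add' x y := by
    funext a
    show ((Umat.mulVec ((x : Fin 2 × Fin 2 → ℂ) + (y : Fin 2 × Fin 2 → ℂ))) a * _).re = _
    rw [Matrix.mulVec_add, Pi.add_apply, add_mul, Complex.add_re]
    rfl
  map_smul' r x := by
    funext a
    show ((Umat.mulVec (r • (x : Fin 2 × Fin 2 → ℂ))) a * _).re = _
    rw [Matrix.mulVec_smul, Pi.smul_apply, smul_mul_assoc, Complex.real_smul, Complex.mul_re]
    simp
  invFun g := ⟨∑ a : Fin 2 × Fin 2, g a • hb a,
    sum_mem (fun a _ => Submodule.smul_mem _ _ (hb_mem a))⟩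
  left_inv x := by
    apply Subtype.ext
    show ∑ a : Fin 2 × Fin 2, ((Umat.mulVec (x : Fin 2 × Fin 2 → ℂ)) a * ((1 - Complex.I)/2)).re • hb a = (x : Fin 2 × Fin 2 → ℂ)
    exact (decomp_minus (mem_Wminus.mp x.2)).symm
  right_inv g := by
    funext b
    show ((Umat.mulVec (∑ a : Fin 2 × Fin 2, g a • hb a)) b * ((1 - Complex.I)/2)).re = g b
    rw [_root_.mulVec_sum]
    rw [Finset.sum_congr rfl (fun a _ => Matrix.mulVec_smul Umat (g a) (hb a))]
    rw [Finset.sum_apply]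
    simp only [Pi.smul_apply, Uhb]
    rw [Finset.sum_congr rfl (fun a _ => by
      show g a • ((1 + Complex.I) * (if b = a then 1 else 0)) = if b = a then g a • (1 + Complex.I) else 0
      split <;> simp)]
    rw [Finset.sum_ite_eq, if_pos (Finset.mem_univ b)]
    rw [smul_mul_assoc, one_plus_mul, Complex.real_smul, mul_one, Complex.ofReal_re]

lemma finrank_Wplus : Module.finrank ℝ Wplus = 4 := by
  rw [wplus_equiv.finrank_eq]
  simp [Module.finrank_pi]

lemma finrank_Wminus : Module.finrank ℝ Wminus = 4 := by
  rw [wminus_equiv.finrank_eq]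
  simp [Module.finrank_pi]

----------------------------------------------------------------------
-- invariance under the full algebra
----------------------------------------------------------------------

lemma calA_invariant (S : Submodule ℝ (Fin 2 × Fin 2 → ℂ))
    (hinv : ∀ k : ℝ, ∀ w ∈ S, (Amat k).mulVec w ∈ S) :
    ∀ X ∈ calA, ∀ u ∈ S, X.mulVec u ∈ S := by
  intro X hX
  let T : Subalgebra ℝ (Matrix (Fin 2 × Fin 2) (Fin 2 × Fin 2) ℂ) :=
    { carrier := {Y | ∀ u ∈ S, Y.mulVec u ∈ S}
      mul_mem' := fun {X Y} hX hY u hu => by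
        rw [← Matrix.mulVec_mulVec]; exact hX _ (hY u hu)
      one_mem' := fun u hu => by rwa [Matrix.one_mulVec]
      add_mem' := fun {X Y} hX hY u hu => by
        rw [Matrix.add_mulVec]; exact S.add_mem (hX u hu) (hY u hu)
      zero_mem' := fun u hu => by rw [Matrix.zero_mulVec]; exact S.zero_mem
      algebraMap_mem' := fun r u hu => by
        rw [Algebra.algebraMap_eq_smul_one, Matrix.smul_mulVec, Matrix.one_mulVec]
        exact S.smul_mem r hu }
  have hle : calA ≤ T := Algebra.adjoin_le (by rintro _ ⟨k, rfl⟩; exact fun u hu => hinv k u hu)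
  exact hle hX

----------------------------------------------------------------------
-- irreducibility
----------------------------------------------------------------------

lemma irred_plus (S : Submodule ℝ (Fin 2 × Fin 2 → ℂ)) (hle : S ≤ Wplus)
    (hinv : ∀ k : ℝ, ∀ w ∈ S, (Amat k).mulVec w ∈ S) : S = ⊥ ∨ S = Wplus := by
  by_cases hbot : S = ⊥
  · left; exact hbot
  right
  obtain ⟨w, hwS, hw0⟩ := (Submodule.ne_bot_iff S).mp hbot
  have hCw : Cmap w = w := mem_Wplus.mp (hle hwS)
  have hvne : ∃ b, (Umat.mulVec w) b ≠ 0 := by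
    by_contra hv
    push_neg at hv
    apply hw0
    have h0 : Umat.mulVec w = 0 := funext fun b => hv b
    rw [w_eq w, h0, Matrix.mulVec_zero]
  obtain ⟨b, hb0⟩ := hvne
  have htne : ((Umat.mulVec w) b * ((1 + Complex.I)/2)).re ≠ 0 := by
    intro h0
    apply hb0
    conv_lhs => rw [reflect_plus (hv_plus hCw b)]
    rw [h0]
    simp
  have hAll := calA_invariant S hinv
  have hhaS : ∀ a, ha a ∈ S := by
    intro a
    have hmem := hAll (psiM (E a b)) (psiE_mem a b) w hwS
    rw [psiE_mulVec] at hmem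
    have hv : (Umat.mulVec w) b • (fun i => Vmat i a)
        = ((Umat.mulVec w) b * ((1 + Complex.I)/2)).re • ha a := by
      funext i
      rw [Pi.smul_apply, Pi.smul_apply, smul_eq_mul]
      conv_lhs => rw [reflect_plus (hv_plus hCw b)]
      rw [show ha a i = (1 - Complex.I) * Vmat i a from rfl, Complex.real_smul]
      ring
    rw [hv] at hmem
    have := S.smul_mem (((Umat.mulVec w) b * ((1 + Complex.I)/2)).re)⁻¹ hmem
    rwa [smul_smul, inv_mul_cancel₀ htne, one_smul] at this
  apply le_antisymm hle
  intro u hu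
  rw [decomp_plus (mem_Wplus.mp hu)]
  exact sum_mem fun a _ => S.smul_mem _ (hhaS a)

lemma irred_minus (S : Submodule ℝ (Fin 2 × Fin 2 → ℂ)) (hle : S ≤ Wminus)
    (hinv : ∀ k : ℝ, ∀ w ∈ S, (Amat k).mulVec w ∈ S) : S = ⊥ ∨ S = Wminus := by
  by_cases hbot : S = ⊥
  · left; exact hbot
  right
  obtain ⟨w, hwS, hw0⟩ := (Submodule.ne_bot_iff S).mp hbot
  have hCw : Cmap w = -w := mem_Wminus.mp (hle hwS)
  have hvne : ∃ b, (Umat.mulVec w) b ≠ 0 := by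
    by_contra hv
    push_neg at hv
    apply hw0
    have h0 : Umat.mulVec w = 0 := funext fun b => hv b
    rw [w_eq w, h0, Matrix.mulVec_zero]
  obtain ⟨b, hb0⟩ := hvne
  have htne : ((Umat.mulVec w) b * ((1 - Complex.I)/2)).re ≠ 0 := by
    intro h0
    apply hb0
    conv_lhs => rw [reflect_minus (hv_minus hCw b)]
    rw [h0]
    simp
  have hAll := calA_invariant S hinv
  have hhbS : ∀ a, hb a ∈ S := by
    intro a
    have hmem := hAll (psiM (E a b)) (psiE_mem a b) w hwS
    rw [psiE_mulVec] at hmem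
    have hv : (Umat.mulVec w) b • (fun i => Vmat i a)
        = ((Umat.mulVec w) b * ((1 - Complex.I)/2)).re • hb a := by
      funext i
      rw [Pi.smul_apply, Pi.smul_apply, smul_eq_mul]
      conv_lhs => rw [reflect_minus (hv_minus hCw b)]
      rw [show hb a i = (1 + Complex.I) * Vmat i a from rfl, Complex.real_smul]
      ring
    rw [hv] at hmem
    have := S.smul_mem (((Umat.mulVec w) b * ((1 - Complex.I)/2)).re)⁻¹ hmem
    rwa [smul_smul, inv_mul_cancel₀ htne, one_smul] at this
  apply le_antisymm hle
  intro u hu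
  rw [decomp_minus (mem_Wminus.mp hu)]
  exact sum_mem fun a _ => S.smul_mem _ (hhbS a)

----------------------------------------------------------------------
-- main theorem
----------------------------------------------------------------------

/-- (1) `C` commutes with every `A(k)` as an ℝ-linear map on `ℂ⁴`, so the real eigenspaces
`W₊` and `W₋`, each of ℝ-dimension 4, are invariant under every `A(k)`;
(2) the unital ℝ-subalgebra `𝒜` generated by `{A(k) : k ∈ ℝ}` has `dim_ℝ 𝒜 = 16`, and
`U·𝒜·U⁻¹ = Mat₄(ℝ) ⊂ Mat₄(ℂ)`;
(3) `𝒜` acts irreducibly on each of `W₊` and `W₋`. -/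
theorem stmt1 :
    (∀ k : ℝ, ∀ w : Fin 2 × Fin 2 → ℂ,
      Cmap ((Amat k).mulVec w) = (Amat k).mulVec (Cmap w)) ∧
    Module.finrank ℝ Wplus = 4 ∧
    Module.finrank ℝ Wminus = 4 ∧
    (∀ k : ℝ, ∀ w ∈ Wplus, (Amat k).mulVec w ∈ Wplus) ∧
    (∀ k : ℝ, ∀ w ∈ Wminus, (Amat k).mulVec w ∈ Wminus) ∧
    Module.finrank ℝ calA = 16 ∧
    ((fun X => Umat * X * Umat⁻¹) '' (calA : Set (Matrix (Fin 2 × Fin 2) (Fin 2 × Fin 2) ℂ)) =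
      {Y : Matrix (Fin 2 × Fin 2) (Fin 2 × Fin 2) ℂ | ∀ ij mn, (Y ij mn).im = 0}) ∧
    (∀ S : Submodule ℝ (Fin 2 × Fin 2 → ℂ), S ≤ Wplus →
      (∀ k : ℝ, ∀ w ∈ S, (Amat k).mulVec w ∈ S) → S = ⊥ ∨ S = Wplus) ∧
    (∀ S : Submodule ℝ (Fin 2 × Fin 2 → ℂ), S ≤ Wminus →
      (∀ k : ℝ, ∀ w ∈ S, (Amat k).mulVec w ∈ S) → S = ⊥ ∨ S = Wminus) := by
  refine ⟨C1, finrank_Wplus, finrank_Wminus, ?_, ?_, finrank_calA, image_eq,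
    irred_plus, irred_minus⟩
  · intro k w hw
    rw [mem_Wplus, C1, mem_Wplus.mp hw]
  · intro k w hw
    rw [mem_Wminus, C1, mem_Wminus.mp hw, Matrix.mulVec_neg]
end

section
/- Let h : ℝ → ℂ⁴ be a measurable vector-valued function satisfying h(−k) = conj(h(k)) for almost every k ∈ ℝ and the renormalisation relation h(k/λ) = (1/λ)·A(k/λ)·h(k) for almost every k ∈ ℝ. If there exists ε > 0 such that h(k) = 0 for almost every k ∈ [ε/λ, ε], then h(k) = 0 for almost every k ∈ ℝ. -/
open MeasureTheory Filter

lemma one_lt_lam : 1 < lam := by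
  have : (1:ℝ) < Real.sqrt 13 := by
    rw [show (1:ℝ) = Real.sqrt 1 by simp]
    exact Real.sqrt_lt_sqrt (by norm_num) (by norm_num)
  unfold lam; linarith

lemma lam_pos : 0 < lam := lt_trans one_pos one_lt_lam
lemma lam_ne : lam ≠ 0 := ne_of_gt lam_pos

lemma pfun_zero_mem {k : ℝ} (hp : pfun k = 0) : ∃ n : ℤ, k = n / 3 := by
  have e1 : Complex.exp (((2 * Real.pi * k * (lam + 1) : ℝ) : ℂ) * Complex.I) *
      Complex.exp (-((2 * Real.pi * k : ℝ) : ℂ) * Complex.I)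
      = Complex.exp (((2 * Real.pi * k * lam : ℝ) : ℂ) * Complex.I) := by
    rw [← Complex.exp_add]; congr 1; push_cast; ring
  have e2 : Complex.exp (((2 * Real.pi * k * (lam + 1) : ℝ) : ℂ) * Complex.I) *
      Complex.exp (((2 * Real.pi * k : ℝ) : ℂ) * Complex.I)
      = Complex.exp (((2 * Real.pi * k * (lam + 2) : ℝ) : ℂ) * Complex.I) := by
    rw [← Complex.exp_add]; congr 1; push_cast; ring
  have hfac : pfun k = Complex.exp (((2 * Real.pi * k * (lam + 1) : ℝ) : ℂ) * Complex.I) *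
      (1 + 2 * Complex.cos ((2 * Real.pi * k : ℝ) : ℂ)) := by
    rw [Complex.cos]; unfold pfun; linear_combination -e1 - e2
  rw [hfac] at hp
  have h2 : (1 : ℂ) + 2 * Complex.cos ((2 * Real.pi * k : ℝ) : ℂ) = 0 :=
    (mul_eq_zero.1 hp).resolve_left (Complex.exp_ne_zero _)
  have hc : Real.cos (2 * Real.pi * k) = -(1/2) := by
    apply Complex.ofReal_injective
    rw [Complex.ofReal_cos]
    push_cast at h2 ⊢
    linear_combination h2 / 2
  have h3 : Real.cos (3 * (2 * Real.pi * k)) = 1 := by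
    rw [Real.cos_three_mul, hc]; ring
  obtain ⟨n, hn⟩ := (Real.cos_eq_one_iff _).1 h3
  refine ⟨n, ?_⟩
  have hpi := Real.pi_ne_zero
  field_simp at hn ⊢
  nlinarith [hn, Real.pi_pos]

lemma Akey {k : ℝ} (hp : pfun k ≠ 0) {v : Fin 2 × Fin 2 → ℂ}
    (hv : (Amat k).mulVec v = 0) : v = 0 := by
  have e11 := congrFun hv (1,1)
  have e10 := congrFun hv (1,0)
  have e01 := congrFun hv (0,1)
  have e00 := congrFun hv (0,0)
  simp [Amat, Bmat, Matrix.mulVec, dotProduct, Fintype.sum_prod_type,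
    Fin.sum_univ_two] at e11 e10 e01 e00
  have hpc : (starRingEnd ℂ) (pfun k) ≠ 0 := by simpa using hp
  have h00 : v (0,0) = 0 := e11.resolve_left hp
  have h01 : v (0,1) = 0 := by rw [h00] at e10; simpa [hp] using e10
  have h10 : v (1,0) = 0 := by rw [h00] at e01; simpa [hpc] using e01
  have h11 : v (1,1) = 0 := by rw [h00, h01, h10] at e00; simpa using e00
  funext ij
  rw [Pi.zero_apply]
  fin_cases ij
  · exact h00
  · exact h01
  · exact h10
  · exact h11

lemma zpow_succ' (n : ℤ) : lam ^ n = lam ^ (n - 1) * lam := by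
  rw [← zpow_add_one₀ lam_ne (n - 1)]; norm_num

lemma null_pre_mul {c : ℝ} (hc : c ≠ 0) {s : Set ℝ} (hs : volume s = 0) :
    volume ((fun x => c * x) ⁻¹' s) = 0 := by
  rw [show (fun x => c * x) = (c * ·) from rfl, Real.volume_preimage_mul_left hc, hs, mul_zero]

/-- Let `h : ℝ → ℂ⁴` be measurable with `h(−k) = conj(h(k))` a.e. and satisfying the
renormalisation relation `h(k/λ) = (1/λ)·A(k/λ)·h(k)` for a.e. `k ∈ ℝ`. If there is
`ε > 0` with `h = 0` a.e. on `[ε/λ, ε]`, then `h = 0` a.e. on `ℝ`. -/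
theorem stmt3 (h : ℝ → (Fin 2 × Fin 2 → ℂ)) (hmeas : Measurable h)
    (hsym : ∀ᵐ k : ℝ, h (-k) = fun ij => (starRingEnd ℂ) (h k ij))
    (hren : ∀ᵐ k : ℝ, h (k / lam) = (lam : ℂ)⁻¹ • (Amat (k / lam)).mulVec (h k))
    (ε : ℝ) (hε : 0 < ε)
    (hzero : ∀ᵐ k ∂(volume.restrict (Set.Icc (ε / lam) ε)), h k = 0) :
    ∀ᵐ k : ℝ, h k = 0 := by
  classical
  set bad : Set ℝ := {k | h k ≠ 0} with hbad_def
  set F : Set ℝ :=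
    {k : ℝ | ¬ (h (k / lam) = (lam : ℂ)⁻¹ • (Amat (k / lam)).mulVec (h k))} with hF_def
  have hF : volume F = 0 := ae_iff.1 hren
  set Z : Set ℝ := {k : ℝ | pfun (k / lam) = 0} with hZ_def
  have hZ : volume Z = 0 := by
    refine measure_mono_null (fun k hk => ?_)
      ((Set.countable_range (fun n : ℤ => lam * ((n : ℝ) / 3))).measure_zero _)
    obtain ⟨n, hn⟩ := pfun_zero_mem hk
    exact ⟨n, by show lam * ((n:ℝ)/3) = k; rw [← hn, mul_comm, div_mul_cancel₀ k lam_ne]⟩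
  have hlamC : ((lam : ℂ))⁻¹ ≠ 0 := by
    simp [Complex.ofReal_ne_zero, lam_ne]
  have hzero' : volume (Set.Icc (ε / lam) ε ∩ bad) = 0 := by
    have h1 := ae_iff.1 hzero
    rw [Measure.restrict_apply' measurableSet_Icc] at h1
    rw [Set.inter_comm]
    exact h1
  -- the key family of null sets
  have hP : ∀ n : ℤ, volume (Set.Icc (ε * lam ^ n) (ε * lam ^ (n + 1)) ∩ bad) = 0 := by
    have base : volume (Set.Icc (ε * lam ^ (-1 : ℤ)) (ε * lam ^ ((-1 : ℤ) + 1)) ∩ bad) = 0 := by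
      have : ε * lam ^ (-1 : ℤ) = ε / lam := by
        rw [zpow_neg_one]; ring
      have h2 : ε * lam ^ ((-1 : ℤ) + 1) = ε := by norm_num
      rw [this, h2]; exact hzero'
    have down : ∀ n : ℤ,
        volume (Set.Icc (ε * lam ^ n) (ε * lam ^ (n + 1)) ∩ bad) = 0 →
        volume (Set.Icc (ε * lam ^ (n - 1)) (ε * lam ^ n) ∩ bad) = 0 := by
      intro n hn
      refine measure_mono_null ?_ (null_pre_mul lam_ne (measure_union_null hn hF))
      · rintro k ⟨⟨hk1, hk2⟩, hkbad⟩
        have hmem : lam * k ∈ Set.Icc (ε * lam ^ n) (ε * lam ^ (n + 1)) := by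
          constructor
          · calc ε * lam ^ n = lam * (ε * lam ^ (n - 1)) := by
                  rw [zpow_succ' n]; ring
              _ ≤ lam * k := mul_le_mul_of_nonneg_left hk1 (le_of_lt lam_pos)
          · calc lam * k ≤ lam * (ε * lam ^ n) :=
                  mul_le_mul_of_nonneg_left hk2 (le_of_lt lam_pos)
              _ = ε * lam ^ (n + 1) := by rw [zpow_add_one₀ lam_ne n]; ring
        by_cases hFk : lam * k ∈ F
        · exact Or.inr hFk
        left
        refine ⟨hmem, ?_⟩
        intro hzero2
        apply hkbad
        have heq : h (lam * k / lam) = (lam : ℂ)⁻¹ • (Amat (lam * k / lam)).mulVec (h (lam * k)) :=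
          not_not.1 hFk
        rw [mul_div_cancel_left₀ k lam_ne] at heq
        rw [heq, hzero2, Matrix.mulVec_zero, smul_zero]
    have up : ∀ n : ℤ,
        volume (Set.Icc (ε * lam ^ (n - 1)) (ε * lam ^ n) ∩ bad) = 0 →
        volume (Set.Icc (ε * lam ^ n) (ε * lam ^ (n + 1)) ∩ bad) = 0 := by
      intro n hn
      refine measure_mono_null ?_ (measure_union_null (measure_union_null hF hZ)
        (null_pre_mul (inv_ne_zero lam_ne) hn))
      · rintro k ⟨⟨hk1, hk2⟩, hkbad⟩
        by_cases hFk : k ∈ F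
        · exact Or.inl (Or.inl hFk)
        by_cases hZk : k ∈ Z
        · exact Or.inl (Or.inr hZk)
        right
        have heq : h (k / lam) = (lam : ℂ)⁻¹ • (Amat (k / lam)).mulVec (h k) := not_not.1 hFk
        have hmem : lam⁻¹ * k ∈ Set.Icc (ε * lam ^ (n - 1)) (ε * lam ^ n) := by
          constructor
          · rw [show ε * lam ^ (n - 1) = lam⁻¹ * (ε * lam ^ n) by
              rw [eq_comm, inv_mul_eq_iff_eq_mul₀ lam_ne, zpow_succ' n]; ring]
            exact mul_le_mul_of_nonneg_left hk1 (le_of_lt (inv_pos.2 lam_pos))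
          · rw [show ε * lam ^ n = lam⁻¹ * (ε * lam ^ (n + 1)) by
              rw [eq_comm, inv_mul_eq_iff_eq_mul₀ lam_ne, zpow_add_one₀ lam_ne n]; ring]
            exact mul_le_mul_of_nonneg_left hk2 (le_of_lt (inv_pos.2 lam_pos))
        refine ⟨hmem, ?_⟩
        intro hz
        apply hkbad
        have hz' : h (k / lam) = 0 := by
          rw [show k / lam = lam⁻¹ * k by ring]; exact hz
        rw [hz'] at heq
        have hA : (Amat (k / lam)).mulVec (h k) = 0 :=
          (smul_eq_zero.1 heq.symm).resolve_left hlamC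
        exact Akey hZk hA
    have base' : volume (Set.Icc (ε * lam ^ ((0 : ℤ) - 1)) (ε * lam ^ (0 : ℤ)) ∩ bad) = 0 := by
      norm_num at base ⊢
      exact base
    have P0 := up 0 base'
    intro n
    induction n using Int.induction_on with
    | zero => exact P0
    | succ i ih =>
      have := up ((i : ℤ) + 1) (by norm_num at ih ⊢; exact ih)
      norm_num at this ⊢
      exact this
    | pred i ih =>
      have := down (-(i : ℤ)) (by norm_num at ih ⊢; exact ih)
      norm_num at this ⊢
      exact this
  -- positive part
  have hpos : volume {k : ℝ | 0 < k ∧ h k ≠ 0} = 0 := by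
    refine measure_mono_null ?_ (measure_iUnion_null fun n => hP n)
    · rintro k ⟨hk0, hkbad⟩
      obtain ⟨n, hn1, hn2⟩ := exists_mem_Ico_zpow (div_pos hk0 hε) one_lt_lam
      refine Set.mem_iUnion.2 ⟨n, ⟨?_, ?_⟩, hkbad⟩
      · have := (le_div_iff₀ hε).1 hn1; linarith
      · have := (div_lt_iff₀ hε).1 hn2; linarith
  -- negative part
  have hNsym : volume {k : ℝ | ¬ h (-k) = fun ij => (starRingEnd ℂ) (h k ij)} = 0 :=
    ae_iff.1 hsym
  have hneg : volume {k : ℝ | k < 0 ∧ h k ≠ 0} = 0 := by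
    refine measure_mono_null ?_ (measure_union_null hNsym (null_pre_mul (c := (-1 : ℝ)) (by norm_num) hpos))
    · rintro k ⟨hk0, hkbad⟩
      by_cases hs : h (-k) = fun ij => (starRingEnd ℂ) (h k ij)
      · right
        refine ⟨by simpa using neg_pos.2 hk0, ?_⟩
        intro hzk
        apply hkbad
        have hzk' : h (-k) = 0 := by
          rw [show -k = -1 * k by ring]; exact hzk
        rw [hzk'] at hs
        funext ij
        have := congrFun hs.symm ij
        simpa using this
      · exact Or.inl hs
  rw [ae_iff]
  refine measure_mono_null ?_
    (measure_union_null (measure_union_null (measure_singleton 0) hpos) hneg)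
  · intro k hk
    rcases lt_trichotomy k 0 with hlt | heq | hgt
    · exact Or.inr ⟨hlt, hk⟩
    · exact Or.inl (Or.inl heq)
    · exact Or.inl (Or.inr ⟨hgt, hk⟩)
end

section
/- For every integer n ≥ 1 there exists a constant δ > 0 such that ‖B⁽ⁿ⁾(k)‖_F² ≥ δ holds for all k ∈ ℝ. Consequently, for each n ≥ 1 the function k ↦ log(‖B⁽ⁿ⁾(k)‖_F²) is Bohr almost periodic. -/
open Filter

/-- The outward matrix product `B⁽ⁿ⁾(k) = B(k)·B(λk)·…·B(λⁿ⁻¹k)`. -/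
noncomputable def Bout (k : ℝ) : ℕ → Matrix (Fin 2) (Fin 2) ℂ
  | 0 => 1
  | n + 1 => Bout k n * Bmat (lam ^ n * k)

/-- The squared Frobenius norm `‖M‖_F²` of a complex 2×2 matrix. -/
noncomputable def frobSq (M : Matrix (Fin 2) (Fin 2) ℂ) : ℝ :=
  ∑ i : Fin 2, ∑ j : Fin 2, ‖M i j‖ ^ 2

/-- A function `f : ℝ → ℝ` is Bohr almost periodic if it is continuous and, for every
`ε > 0`, the set of `ε`-almost periods is relatively dense in `ℝ`. -/
def IsBohrAP (f : ℝ → ℝ) : Prop :=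
  Continuous f ∧
    ∀ ε : ℝ, 0 < ε → ∃ L : ℝ, 0 < L ∧ ∀ x₀ : ℝ,
      ∃ t ∈ Set.Icc x₀ (x₀ + L), ∀ x : ℝ, |f (x - t) - f x| < ε

noncomputable section

def gp (x : ℕ → ℂ) (j : ℕ) : ℂ := x (j+1) * (1 + x j + x j ^ 2)

/-- auxiliary: abstract matrix product. -/
def gB (x : ℕ → ℂ) : ℕ → Matrix (Fin 2) (Fin 2) ℂ
  | 0 => 1
  | m + 1 => gB x m * !![1, 1; gp x m, 0]

def aseq (x : ℕ → ℂ) : ℕ → ℂ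
  | 0 => 1
  | 1 => 1
  | m + 2 => aseq x (m+1) + gp x (m+1) * aseq x m

def cseq (x : ℕ → ℂ) : ℕ → ℂ
  | 0 => 0
  | 1 => gp x 0
  | m + 2 => cseq x (m+1) + gp x (m+1) * cseq x m

lemma gB_entries (x : ℕ → ℂ) : ∀ m : ℕ,
    gB x (m+1) = !![aseq x (m+1), aseq x m; cseq x (m+1), cseq x m] := by
  intro m
  induction m with
  | zero =>
    show (1 : Matrix (Fin 2) (Fin 2) ℂ) * !![1, 1; gp x 0, 0] = _
    rw [one_mul]
    simp [aseq, cseq]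
  | succ m ih =>
    show gB x (m+1) * !![1, 1; gp x (m+1), 0] = _
    rw [ih, Matrix.mul_fin_two]
    ext i j
    fin_cases i <;> fin_cases j <;> simp [aseq, cseq] <;> ring

def Dq (x : ℕ → ℂ) (m : ℕ) : ℂ :=
  aseq x m * cseq x (m+1) - aseq x (m+1) * cseq x m

lemma Dq_zero (x : ℕ → ℂ) : ∀ m, Dq x m = 0 → ∃ i, i ≤ m ∧ gp x i = 0 := by
  intro m
  induction m with
  | zero =>
    intro h
    refine ⟨0, le_refl _, ?_⟩
    simpa [Dq, aseq, cseq] using h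
  | succ m ih =>
    intro h
    have hrec : Dq x (m+1) = -gp x (m+1) * Dq x m := by
      simp only [Dq, aseq, cseq]
      ring
    rw [hrec] at h
    rcases mul_eq_zero.mp h with h1 | h2
    · exact ⟨m+1, le_refl _, by simpa using h1⟩
    · obtain ⟨i, hi, hgi⟩ := ih h2
      exact ⟨i, Nat.le_succ_of_le hi, hgi⟩

def gseq : ℕ → ℕ
  | 0 => 1
  | 1 => 1
  | m + 2 => gseq (m+1) + 3 * gseq m

lemma gseq_mod3 : ∀ m, gseq m % 3 = 1 := by
  intro m
  induction m using Nat.strong_induction_on with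
  | _ m ih =>
    match m with
    | 0 => rfl
    | 1 => rfl
    | m + 2 =>
      have h1 := ih (m+1) (by omega)
      show (gseq (m+1) + 3 * gseq m) % 3 = 1
      omega

lemma gseq_coprime : ∀ m, Nat.Coprime (gseq m) (gseq (m+1)) := by
  intro m
  induction m with
  | zero => decide
  | succ m ih =>
    show Nat.Coprime (gseq (m+1)) (gseq (m+1) + 3 * gseq m)
    have h : gseq (m+1) + 3 * gseq m = 3 * gseq m + gseq (m+1) * 1 := by ring
    rw [h, Nat.coprime_add_mul_left_right]
    have h3 : Nat.Coprime (gseq (m+1)) 3 := by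
      have hm := gseq_mod3 (m+1)
      show Nat.gcd (gseq (m+1)) 3 = 1
      rw [Nat.gcd_comm, Nat.gcd_rec, hm]; rfl
    exact Nat.Coprime.mul_right h3 (Nat.coprime_comm.mp ih)


def sseq (x : ℕ → ℂ) (j : ℕ) : ℕ → ℂ
  | 0 => 1
  | 1 => 1
  | m + 2 => sseq x j (m+1) + gp x (j+m+1) * sseq x j m

lemma pow_eq_one_of_coprime (y : ℂ) (hy : y ≠ 0) (A B : ℕ)
    (hA : y ^ A = 1) (hB : y ^ B = 1) (hco : Nat.Coprime A B) : y = 1 := by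
  have hic : IsCoprime (A : ℤ) (B : ℤ) := by
    rw [Int.isCoprime_iff_gcd_eq_one]
    simpa [Int.gcd] using hco
  obtain ⟨u, v, huv⟩ := hic
  have h1 : y ^ ((1 : ℤ)) = 1 := by
    rw [← huv, zpow_add₀ hy, mul_comm u (A:ℤ), mul_comm v (B:ℤ), zpow_mul, zpow_mul]
    rw [zpow_natCast, zpow_natCast, hA, hB]
    simp
  simpa using h1

section key
variable (x : ℕ → ℂ)

/-- collapse after a vanishing p -/
lemma collapse (j : ℕ) (hj : gp x j = 0) : ∀ m : ℕ,
    (aseq x (j+m) = sseq x j m * aseq x j ∧ cseq x (j+m) = sseq x j m * cseq x j) ∧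
    (aseq x (j+m+1) = sseq x j (m+1) * aseq x j ∧
      cseq x (j+m+1) = sseq x j (m+1) * cseq x j) := by
  intro m
  induction m with
  | zero =>
    refine ⟨⟨by simp [sseq], by simp [sseq]⟩, ?_, ?_⟩
    · match j with
      | 0 => simp [aseq, sseq]
      | i + 1 =>
        show aseq x (i + 1 + 1) = sseq x (i+1) 1 * aseq x (i+1)
        have : aseq x (i + 2) = aseq x (i+1) + gp x (i+1) * aseq x i := rfl
        rw [show i + 1 + 1 = i + 2 from rfl, this, hj]
        simp [sseq]
    · match j with
      | 0 =>
        show cseq x 1 = sseq x 0 1 * cseq x 0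
        simp [cseq, sseq, hj]
      | i + 1 =>
        show cseq x (i + 2) = sseq x (i+1) 1 * cseq x (i+1)
        have : cseq x (i + 2) = cseq x (i+1) + gp x (i+1) * cseq x i := rfl
        rw [this, hj]
        simp [sseq]
  | succ m ih =>
    obtain ⟨h0, h1⟩ := ih
    refine ⟨h1, ?_, ?_⟩
    · have : aseq x (j + (m+1) + 1) = aseq x ((j+m) + 2) := by ring_nf
      rw [this]
      show aseq x (j+m+1) + gp x (j+m+1) * aseq x (j+m) = _
      rw [h1.1, h0.1]
      show _ = sseq x j (m+2) * aseq x j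
      show _ = (sseq x j (m+1) + gp x (j+m+1) * sseq x j m) * aseq x j
      ring
    · have : cseq x (j + (m+1) + 1) = cseq x ((j+m) + 2) := by ring_nf
      rw [this]
      show cseq x (j+m+1) + gp x (j+m+1) * cseq x (j+m) = _
      rw [h1.2, h0.2]
      show _ = (sseq x j (m+1) + gp x (j+m+1) * sseq x j m) * cseq x j
      ring

end key

section key
variable (x : ℕ → ℂ)

/-- orbit powers after a cube-root point -/
lemma orbitPow (hrec : ∀ l, x (l+2) = x (l+1) * x l ^ 3) (j : ℕ) (hcube : x j ^ 3 = 1) : ∀ m : ℕ,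
    x (j + 1 + m) = x (j+1) ^ gseq m ∧ x (j + 1 + (m+1)) = x (j+1) ^ gseq (m+1) := by
  intro m
  induction m with
  | zero =>
    constructor
    · simp [gseq]
    · have : x (j + 1 + 1) = x (j + 2) := by ring_nf
      rw [this, hrec j, hcube]
      simp [gseq]
  | succ m ih =>
    refine ⟨ih.2, ?_⟩
    have e1 : j + 1 + (m + 2) = (j + 1 + m) + 2 := by ring
    rw [e1, hrec (j+1+m), ih.1, show j+1+m+1 = j+1+(m+1) from rfl, ih.2]
    rw [← pow_mul, ← pow_add]
    show _ = x (j+1) ^ gseq (m+2)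
    show _ = x (j+1) ^ (gseq (m+1) + 3 * gseq m)
    ring_nf

/-- the telescoping identity -/
lemma sIdent (hrec : ∀ l, x (l+2) = x (l+1) * x l ^ 3) (j : ℕ) (hcube : x j ^ 3 = 1) : ∀ m : ℕ,
    ((x (j+1) - 1) * sseq x j m = x (j+1) ^ gseq m - 1) ∧
    ((x (j+1) - 1) * sseq x j (m+1) = x (j+1) ^ gseq (m+1) - 1) := by
  intro m
  induction m with
  | zero => constructor <;> simp [sseq, gseq]
  | succ m ih =>
    refine ⟨ih.2, ?_⟩
    show (x (j+1) - 1) * sseq x j (m+2) = x (j+1) ^ gseq (m+2) - 1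
    have hs : sseq x j (m+2) = sseq x j (m+1) + gp x (j+m+1) * sseq x j m := rfl
    have hp : gp x (j+m+1) = x (j+1) ^ gseq (m+1) * (1 + x (j+1) ^ gseq m + (x (j+1) ^ gseq m) ^ 2) := by
      show x (j+m+2) * (1 + x (j+m+1) + x (j+m+1) ^ 2) = _
      have e1 : j + m + 2 = j + 1 + (m+1) := by ring
      have e2 : j + m + 1 = j + 1 + m := by ring
      rw [e1, e2, (orbitPow x hrec j hcube m).2, (orbitPow x hrec j hcube m).1]
    have hg : gseq (m+2) = gseq (m+1) + 3 * gseq m := rfl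
    rw [hs, mul_add, ih.2, mul_comm (gp x (j+m+1)) (sseq x j m), ← mul_assoc, ih.1, hp, hg]
    rw [pow_add, pow_mul]
    ring
end key

-- keyLemma assembly (to append after previous lemmas)
section key2
variable (x : ℕ → ℂ)

lemma keyLemma (hx : ∀ l, x l ≠ 0) (hrec : ∀ l, x (l+2) = x (l+1) * x l ^ 3)
    (N : ℕ) (ha : aseq x N = 0) (hc : cseq x N = 0)
    (ha' : aseq x (N+1) = 0) (hc' : cseq x (N+1) = 0) : False := by
  -- some p vanishes
  have hD : Dq x N = 0 := by rw [Dq, ha, ha']; ring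
  have hex : ∃ i, gp x i = 0 := by
    obtain ⟨i, _, hi⟩ := Dq_zero x N hD
    exact ⟨i, hi⟩
  set j := Nat.find hex with hjdef
  have hj : gp x j = 0 := Nat.find_spec hex
  have hjN : j ≤ N := by
    obtain ⟨i, hiN, hi⟩ := Dq_zero x N hD
    exact le_trans (Nat.find_min' hex hi) hiN
  -- (a j, c j) ≠ (0,0)
  have hvj : aseq x j ≠ 0 ∨ cseq x j ≠ 0 := by
    rcases Nat.eq_zero_or_pos j with h0 | hposj
    · left; rw [h0]; simp [aseq]
    · by_contra hcon
      push_neg at hcon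
      obtain ⟨haj, hcj⟩ := hcon
      obtain ⟨i, hij⟩ : ∃ i, j = i + 1 := ⟨j - 1, by omega⟩
      have hDi : Dq x i = 0 := by
        have e : i + 1 = j := hij.symm
        rw [Dq, e, haj, hcj]
        ring
      obtain ⟨i', hi'le, hi'⟩ := Dq_zero x i hDi
      have : j ≤ i' := Nat.find_min' hex hi'
      omega
  -- cube root
  have hcube : x j ^ 3 = 1 := by
    have h1 : 1 + x j + x j ^ 2 = 0 := by
      rcases mul_eq_zero.mp hj with h | h
      · exact absurd h (hx (j+1))
      · exact h
    have : x j ^ 3 - 1 = (x j - 1) * (1 + x j + x j ^ 2) := by ring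
    have h2 : x j ^ 3 - 1 = 0 := by rw [this, h1, mul_zero]
    linear_combination h2
  -- collapse
  set m0 := N - j with hm0
  have hNj : N = j + m0 := by omega
  have hcol := collapse x j hj m0
  have hcol1 := (hcol.1.1)
  have hcol2 := (hcol.1.2)
  have hcol3 := (hcol.2.1)
  have hcol4 := (hcol.2.2)
  rw [← hNj] at hcol1 hcol2 hcol3 hcol4
  rw [ha] at hcol1; rw [hc] at hcol2; rw [ha'] at hcol3; rw [hc'] at hcol4
  have hs0 : sseq x j m0 = 0 := by
    rcases hvj with h | h
    · rcases mul_eq_zero.mp hcol1.symm with h' | h'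
      · exact h'
      · exact absurd h' h
    · rcases mul_eq_zero.mp hcol2.symm with h' | h'
      · exact h'
      · exact absurd h' h
  have hs1 : sseq x j (m0+1) = 0 := by
    rcases hvj with h | h
    · rcases mul_eq_zero.mp hcol3.symm with h' | h'
      · exact h'
      · exact absurd h' h
    · rcases mul_eq_zero.mp hcol4.symm with h' | h'
      · exact h'
      · exact absurd h' h
  -- identity forces roots of unity
  have hid := sIdent x hrec j hcube m0
  have hy1 : x (j+1) ^ gseq m0 = 1 := by
    have := hid.1
    rw [hs0, mul_zero] at this
    linear_combination -this
  have hy2 : x (j+1) ^ gseq (m0+1) = 1 := by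
    have := hid.2
    rw [hs1, mul_zero] at this
    linear_combination -this
  have hyone : x (j+1) = 1 :=
    pow_eq_one_of_coprime (x (j+1)) (hx (j+1)) _ _ hy1 hy2 (gseq_coprime m0)
  -- but then s-sequence is positive integers
  have hpos : ∀ m, ∃ q : ℕ, 0 < q ∧ sseq x j m = (q : ℂ) ∧
      ∃ q' : ℕ, 0 < q' ∧ sseq x j (m+1) = (q' : ℂ) := by
    intro m
    induction m with
    | zero => exact ⟨1, one_pos, by simp [sseq], 1, one_pos, by simp [sseq]⟩
    | succ m ih =>
      obtain ⟨q, hq, hsq, q', hq', hsq'⟩ := ih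
      refine ⟨q', hq', hsq', q' + 3 * q, by omega, ?_⟩
      show sseq x j (m+1) + gp x (j+m+1) * sseq x j m = _
      have horb := orbitPow x hrec j hcube
      have hgp : gp x (j+m+1) = 3 := by
        show x (j+m+2) * (1 + x (j+m+1) + x (j+m+1)^2) = 3
        have e1 : j + m + 2 = j + 1 + (m+1) := by ring
        have e2 : j + m + 1 = j + 1 + m := by ring
        rw [e1, e2, (horb m).2, (horb m).1, hyone]
        simp
        norm_num
      rw [hsq, hsq', hgp]
      push_cast
      ring
  obtain ⟨q, hq, hsq, _⟩ := hpos m0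
  rw [hs0] at hsq
  have : (q : ℂ) ≠ 0 := Nat.cast_ne_zero.mpr (by omega)
  exact this hsq.symm

end key2



lemma lam_sq : lam ^ 2 = lam + 3 := by
  have h13 : Real.sqrt 13 ^ 2 = 13 := Real.sq_sqrt (by norm_num)
  unfold lam
  linear_combination h13 / 4

lemma exp_coe_add (a b : ℝ) :
    Complex.exp (((a + b : ℝ) : ℂ) * Complex.I) =
      Complex.exp ((a : ℂ) * Complex.I) * Complex.exp ((b : ℂ) * Complex.I) := by
  push_cast
  rw [add_mul, Complex.exp_add]

def Wseq (k : ℝ) (j : ℕ) : ℂ :=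
  Complex.exp (((2 * Real.pi * (lam ^ j * k) : ℝ) : ℂ) * Complex.I)

lemma Wseq_norm (k : ℝ) (j : ℕ) : ‖Wseq k j‖ = 1 := by
  unfold Wseq
  exact Complex.norm_exp_ofReal_mul_I _

lemma Wseq_ne (k : ℝ) (j : ℕ) : Wseq k j ≠ 0 := by
  intro h
  have := Wseq_norm k j
  rw [h] at this
  simp at this

lemma Wseq_rec (k : ℝ) (j : ℕ) : Wseq k (j+2) = Wseq k (j+1) * Wseq k j ^ 3 := by
  unfold Wseq
  rw [← Complex.exp_nat_mul, ← Complex.exp_add]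
  congr 1
  have hl : lam ^ (j+2) = lam ^ (j+1) + 3 * lam ^ j := by
    have h1 : lam ^ (j+2) = lam ^ j * lam ^ 2 := by ring
    rw [h1, lam_sq]
    ring
  have hr : 2 * Real.pi * (lam ^ (j+2) * k) =
      2 * Real.pi * (lam ^ (j+1) * k) + 3 * (2 * Real.pi * (lam ^ j * k)) := by
    rw [hl]; ring
  rw [hr]
  push_cast
  ring

lemma pfun_eq_s13 (k : ℝ) (m : ℕ) : pfun (lam ^ m * k) = gp (Wseq k) m := by
  unfold pfun gp Wseq
  have e1 : 2 * Real.pi * (lam ^ m * k) * lam = 2 * Real.pi * (lam ^ (m+1) * k) := by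
    rw [pow_succ]; ring
  have e2 : 2 * Real.pi * (lam ^ m * k) * (lam + 1) =
      2 * Real.pi * (lam ^ (m+1) * k) + 2 * Real.pi * (lam ^ m * k) := by
    rw [pow_succ]; ring
  have e3 : 2 * Real.pi * (lam ^ m * k) * (lam + 2) =
      2 * Real.pi * (lam ^ (m+1) * k) +
        (2 * Real.pi * (lam ^ m * k) + 2 * Real.pi * (lam ^ m * k)) := by
    rw [pow_succ]; ring
  rw [e1, e2, e3, exp_coe_add, exp_coe_add, exp_coe_add]
  ring

lemma Bout_eq_gB (k : ℝ) : ∀ n, Bout k n = gB (Wseq k) n := by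
  intro n
  induction n with
  | zero => rfl
  | succ n ih =>
    show Bout k n * Bmat (lam ^ n * k) = gB (Wseq k) n * _
    rw [ih, Bmat, pfun_eq_s13]

lemma frobSq_nonneg (M : Matrix (Fin 2) (Fin 2) ℂ) : 0 ≤ frobSq M := by
  apply Finset.sum_nonneg
  intro i _
  apply Finset.sum_nonneg
  intro j _
  positivity

lemma frobSq_mk (a b c d : ℂ) :
    frobSq !![a, b; c, d] =
      ‖a‖ ^ 2 + ‖b‖ ^ 2 + ‖c‖ ^ 2 + ‖d‖ ^ 2 := by
  unfold frobSq
  simp only [Fin.sum_univ_two]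
  rw [show !![a, b; c, d] 0 0 = a from rfl, show !![a, b; c, d] 0 1 = b from rfl,
    show !![a, b; c, d] 1 0 = c from rfl, show !![a, b; c, d] 1 1 = d from rfl]
  ring

lemma gB_frobSq_pos (x : ℕ → ℂ) (hx : ∀ l, x l ≠ 0)
    (hrec : ∀ l, x (l+2) = x (l+1) * x l ^ 3) (m : ℕ) :
    0 < frobSq (gB x (m+1)) := by
  rcases lt_or_ge 0 (frobSq (gB x (m+1))) with h | h
  · exact h
  exfalso
  rw [gB_entries, frobSq_mk] at h
  have t1 : (0:ℝ) ≤ ‖aseq x (m+1)‖ ^ 2 := by positivity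
  have t2 : (0:ℝ) ≤ ‖aseq x m‖ ^ 2 := by positivity
  have t3 : (0:ℝ) ≤ ‖cseq x (m+1)‖ ^ 2 := by positivity
  have t4 : (0:ℝ) ≤ ‖cseq x m‖ ^ 2 := by positivity
  have z1 : ‖aseq x (m+1)‖ ^ 2 = 0 := by linarith
  have z2 : ‖aseq x m‖ ^ 2 = 0 := by linarith
  have z3 : ‖cseq x (m+1)‖ ^ 2 = 0 := by linarith
  have z4 : ‖cseq x m‖ ^ 2 = 0 := by linarith
  have e1 : aseq x (m+1) = 0 := by
    have := pow_eq_zero_iff (n := 2) (by norm_num) |>.mp z1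
    exact norm_eq_zero.mp this
  have e2 : aseq x m = 0 := by
    have := pow_eq_zero_iff (n := 2) (by norm_num) |>.mp z2
    exact norm_eq_zero.mp this
  have e3 : cseq x (m+1) = 0 := by
    have := pow_eq_zero_iff (n := 2) (by norm_num) |>.mp z3
    exact norm_eq_zero.mp this
  have e4 : cseq x m = 0 := by
    have := pow_eq_zero_iff (n := 2) (by norm_num) |>.mp z4
    exact norm_eq_zero.mp this
  exact keyLemma x hx hrec m e2 e4 e1 e3

lemma gp_cont (m : ℕ) : Continuous fun x : ℕ → ℂ => gp x m := by
  unfold gp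
  exact (continuous_apply (m+1)).mul
    ((continuous_const.add (continuous_apply m)).add ((continuous_apply m).pow 2))

lemma gB_cont (m : ℕ) (i j : Fin 2) : Continuous fun x : ℕ → ℂ => gB x m i j := by
  induction m generalizing i j with
  | zero => exact continuous_const
  | succ m ih =>
    have he : (fun x : ℕ → ℂ => gB x (m+1) i j) =
        fun x => gB x m i 0 * (!![1, 1; gp x m, 0] : Matrix (Fin 2) (Fin 2) ℂ) 0 j
          + gB x m i 1 * (!![1, 1; gp x m, 0] : Matrix (Fin 2) (Fin 2) ℂ) 1 j := by
      funext x
      show (gB x m * !![1, 1; gp x m, 0]) i j = _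
      rw [Matrix.mul_apply, Fin.sum_univ_two]
    rw [he]
    apply Continuous.add
    · apply (ih i 0).mul
      fin_cases j <;> simp <;> exact continuous_const
    · apply (ih i 1).mul
      fin_cases j <;> simp
      · exact gp_cont m
      · exact continuous_const

lemma frobSq_gB_cont (n : ℕ) : Continuous fun x : ℕ → ℂ => frobSq (gB x n) := by
  unfold frobSq
  apply continuous_finset_sum
  intro i _
  apply continuous_finset_sum
  intro j _
  exact (continuous_norm.comp (gB_cont n i j)).pow 2

def Kset : Set (ℕ → ℂ) :=
  {x | (∀ j, ‖x j‖ = 1) ∧ ∀ j, x (j+2) = x (j+1) * x j ^ 3}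

lemma Kset_closed : IsClosed Kset := by
  have : Kset = (⋂ j, {x : ℕ → ℂ | ‖x j‖ = 1}) ∩
      ⋂ j, {x : ℕ → ℂ | x (j+2) = x (j+1) * x j ^ 3} := by
    ext x
    simp [Kset, Set.mem_iInter]
  rw [this]
  apply IsClosed.inter
  · exact isClosed_iInter fun j => isClosed_eq ((continuous_apply j).norm) continuous_const
  · exact isClosed_iInter fun j =>
      isClosed_eq (continuous_apply (j+2)) ((continuous_apply (j+1)).mul ((continuous_apply j).pow 3))

lemma Kset_compact : IsCompact Kset := by
  apply IsCompact.of_isClosed_subset (isCompact_univ_pi fun _ : ℕ => isCompact_sphere (0:ℂ) 1)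
    Kset_closed
  intro x hx j _
  simpa [mem_sphere_zero_iff_norm] using hx.1 j

lemma Kset_nonempty : Kset.Nonempty := by
  refine ⟨fun _ => 1, fun j => by simp, fun j => by simp⟩

lemma Wseq_mem_Kset (k : ℝ) : Wseq k ∈ Kset :=
  ⟨Wseq_norm k, Wseq_rec k⟩

lemma partA (n : ℕ) (hn : 1 ≤ n) :
    ∃ δ : ℝ, 0 < δ ∧ ∀ k : ℝ, δ ≤ frobSq (Bout k n) := by
  obtain ⟨x0, hx0K, hmin⟩ := Kset_compact.exists_isMinOn Kset_nonempty
    ((frobSq_gB_cont n).continuousOn)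
  refine ⟨frobSq (gB x0 n), ?_, ?_⟩
  · obtain ⟨m, rfl⟩ : ∃ m, n = m + 1 := ⟨n - 1, by omega⟩
    apply gB_frobSq_pos x0
    · intro l
      intro h
      have := hx0K.1 l
      rw [h] at this; simp at this
    · exact hx0K.2
  · intro k
    rw [Bout_eq_gB]
    exact hmin (Wseq_mem_Kset k)


section lip
variable (x x' : ℕ → ℂ)

lemma gp_norm_le (hx : ∀ l, ‖x l‖ ≤ 1) (m : ℕ) : ‖gp x m‖ ≤ 3 := by
  unfold gp
  rw [norm_mul]
  have h1 : ‖1 + x m + x m ^ 2‖ ≤ 3 := by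
    calc ‖1 + x m + x m ^ 2‖ ≤ ‖(1:ℂ) + x m‖ + ‖x m ^ 2‖ := norm_add_le _ _
    _ ≤ ‖(1:ℂ)‖ + ‖x m‖ + ‖x m‖^2 := by
        rw [norm_pow]
        exact add_le_add (norm_add_le _ _) le_rfl
    _ ≤ 1 + 1 + 1 := by
        have := hx m
        have h2 : ‖x m‖^2 ≤ 1 := by nlinarith [norm_nonneg (x m)]
        simp only [norm_one]
        linarith
    _ = 3 := by norm_num
  calc ‖x (m+1)‖ * ‖1 + x m + x m ^ 2‖ ≤ 1 * 3 :=
    mul_le_mul (hx (m+1)) h1 (norm_nonneg _) zero_le_one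
  _ = 3 := by norm_num

lemma Bfac_norm_le0 (m : ℕ) (j : Fin 2) :
    ‖(!![1, 1; gp x m, 0] : Matrix (Fin 2) (Fin 2) ℂ) 0 j‖ ≤ 1 := by
  fin_cases j <;> simp

lemma Bfac_norm_le1 (hx : ∀ l, ‖x l‖ ≤ 1) (m : ℕ) (j : Fin 2) :
    ‖(!![1, 1; gp x m, 0] : Matrix (Fin 2) (Fin 2) ℂ) 1 j‖ ≤ 3 := by
  fin_cases j <;> simp
  exact gp_norm_le x hx m

lemma gB_norm_le (hx : ∀ l, ‖x l‖ ≤ 1) : ∀ m (i j : Fin 2), ‖gB x m i j‖ ≤ 4 ^ m := by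
  intro m
  induction m with
  | zero =>
    intro i j
    show ‖(1 : Matrix (Fin 2) (Fin 2) ℂ) i j‖ ≤ 1
    rw [Matrix.one_apply]
    split_ifs <;> simp
  | succ m ih =>
    intro i j
    have he : gB x (m+1) i j =
        gB x m i 0 * (!![1, 1; gp x m, 0] : Matrix (Fin 2) (Fin 2) ℂ) 0 j
          + gB x m i 1 * (!![1, 1; gp x m, 0] : Matrix (Fin 2) (Fin 2) ℂ) 1 j := by
      show (gB x m * !![1, 1; gp x m, 0]) i j = _
      rw [Matrix.mul_apply, Fin.sum_univ_two]
    rw [he]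
    have b0 := Bfac_norm_le0 x m j
    have b1 := Bfac_norm_le1 x hx m j
    have n0 := ih i 0
    have n1 := ih i 1
    calc ‖_ + _‖ ≤ ‖gB x m i 0 * _‖ + ‖gB x m i 1 * _‖ := norm_add_le _ _
    _ = ‖gB x m i 0‖ * ‖(!![1, 1; gp x m, 0] : Matrix (Fin 2) (Fin 2) ℂ) 0 j‖
        + ‖gB x m i 1‖ * ‖(!![1, 1; gp x m, 0] : Matrix (Fin 2) (Fin 2) ℂ) 1 j‖ := by
        rw [norm_mul, norm_mul]
    _ ≤ 4^m * 1 + 4^m * 3 := by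
        have h0 : (0:ℝ) ≤ 4 ^ m := by positivity
        gcongr
    _ = 4 ^ (m+1) := by rw [pow_succ]; ring
end lip

section lip2
variable (x x' : ℕ → ℂ)

lemma gp_diff (hx : ∀ l, ‖x l‖ ≤ 1) (hx' : ∀ l, ‖x' l‖ ≤ 1) (m : ℕ) (η : ℝ)
    (h1 : ‖x (m+1) - x' (m+1)‖ ≤ η) (h2 : ‖x m - x' m‖ ≤ η) :
    ‖gp x m - gp x' m‖ ≤ 6 * η := by
  have hid : gp x m - gp x' m =
      (x (m+1) - x' (m+1)) * (1 + x m + x m ^ 2)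
        + x' (m+1) * ((x m - x' m) + (x m - x' m) * (x m + x' m)) := by
    unfold gp; ring
  have hη : 0 ≤ η := le_trans (norm_nonneg _) h2
  have b1 : ‖(1:ℂ) + x m + x m ^ 2‖ ≤ 3 := by
    calc ‖(1:ℂ) + x m + x m ^ 2‖ ≤ ‖(1:ℂ) + x m‖ + ‖x m ^ 2‖ := norm_add_le _ _
    _ ≤ ‖(1:ℂ)‖ + ‖x m‖ + ‖x m‖ ^ 2 := by
        rw [norm_pow]; exact add_le_add (norm_add_le _ _) le_rfl
    _ ≤ 3 := by
        have := hx m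
        have h2' : ‖x m‖^2 ≤ 1 := by nlinarith [norm_nonneg (x m)]
        simp only [norm_one]; linarith
  have b2 : ‖(x m - x' m) + (x m - x' m) * (x m + x' m)‖ ≤ 3 * η := by
    calc ‖(x m - x' m) + (x m - x' m) * (x m + x' m)‖
        ≤ ‖x m - x' m‖ + ‖(x m - x' m) * (x m + x' m)‖ := norm_add_le _ _
    _ = ‖x m - x' m‖ + ‖x m - x' m‖ * ‖x m + x' m‖ := by rw [norm_mul]
    _ ≤ η + η * 2 := by
        have hs : ‖x m + x' m‖ ≤ 2 := by
          calc ‖x m + x' m‖ ≤ ‖x m‖ + ‖x' m‖ := norm_add_le _ _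
          _ ≤ 2 := by have := hx m; have := hx' m; linarith
        have := norm_nonneg (x m - x' m)
        nlinarith
    _ = 3 * η := by ring
  rw [hid]
  calc ‖_ + _‖ ≤ ‖(x (m+1) - x' (m+1)) * (1 + x m + x m ^ 2)‖
      + ‖x' (m+1) * ((x m - x' m) + (x m - x' m) * (x m + x' m))‖ := norm_add_le _ _
  _ = ‖x (m+1) - x' (m+1)‖ * ‖(1:ℂ) + x m + x m ^ 2‖
      + ‖x' (m+1)‖ * ‖(x m - x' m) + (x m - x' m) * (x m + x' m)‖ := by
      rw [norm_mul, norm_mul]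
  _ ≤ η * 3 + 1 * (3 * η) := by
      have := norm_nonneg ((x m - x' m) + (x m - x' m) * (x m + x' m))
      have := hx' (m+1)
      have hη : 0 ≤ η := le_trans (norm_nonneg _) h2
      have := norm_nonneg (x (m+1) - x' (m+1))
      nlinarith [b1, b2, h1]
  _ = 6 * η := by ring

lemma gB_diff (hx : ∀ l, ‖x l‖ ≤ 1) (hx' : ∀ l, ‖x' l‖ ≤ 1) (η : ℝ) (hη : 0 ≤ η) :
    ∀ m, (∀ l, l ≤ m → ‖x l - x' l‖ ≤ η) →
      ∀ i j : Fin 2, ‖gB x m i j - gB x' m i j‖ ≤ 6 * m * 4 ^ m * η := by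
  intro m
  induction m with
  | zero =>
    intro _ i j
    show ‖(1 : Matrix (Fin 2) (Fin 2) ℂ) i j - (1 : Matrix (Fin 2) (Fin 2) ℂ) i j‖ ≤ _
    simp
  | succ m ih =>
    intro hd i j
    have hdm : ∀ l, l ≤ m → ‖x l - x' l‖ ≤ η := fun l hl => hd l (by omega)
    have he : ∀ (z : ℕ → ℂ), gB z (m+1) i j =
        gB z m i 0 * (!![1, 1; gp z m, 0] : Matrix (Fin 2) (Fin 2) ℂ) 0 j
          + gB z m i 1 * (!![1, 1; gp z m, 0] : Matrix (Fin 2) (Fin 2) ℂ) 1 j := by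
      intro z
      show (gB z m * !![1, 1; gp z m, 0]) i j = _
      rw [Matrix.mul_apply, Fin.sum_univ_two]
    have hB0 : (!![1, 1; gp x m, 0] : Matrix (Fin 2) (Fin 2) ℂ) 0 j
        = (!![1, 1; gp x' m, 0] : Matrix (Fin 2) (Fin 2) ℂ) 0 j := by
      fin_cases j <;> simp
    have hB1 : ‖(!![1, 1; gp x m, 0] : Matrix (Fin 2) (Fin 2) ℂ) 1 j
        - (!![1, 1; gp x' m, 0] : Matrix (Fin 2) (Fin 2) ℂ) 1 j‖ ≤ 6 * η := by
      fin_cases j <;> simp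
      · exact gp_diff x x' hx hx' m η (hd (m+1) (le_refl _)) (hd m (by omega))
      · positivity
    have hid : gB x (m+1) i j - gB x' (m+1) i j =
        (gB x m i 0 - gB x' m i 0) * (!![1, 1; gp x m, 0] : Matrix (Fin 2) (Fin 2) ℂ) 0 j
        + (gB x m i 1 - gB x' m i 1) * (!![1, 1; gp x m, 0] : Matrix (Fin 2) (Fin 2) ℂ) 1 j
        + gB x' m i 0 * ((!![1, 1; gp x m, 0] : Matrix (Fin 2) (Fin 2) ℂ) 0 j
            - (!![1, 1; gp x' m, 0] : Matrix (Fin 2) (Fin 2) ℂ) 0 j)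
        + gB x' m i 1 * ((!![1, 1; gp x m, 0] : Matrix (Fin 2) (Fin 2) ℂ) 1 j
            - (!![1, 1; gp x' m, 0] : Matrix (Fin 2) (Fin 2) ℂ) 1 j) := by
      rw [he x, he x']
      ring
    set A := (gB x m i 0 - gB x' m i 0) * (!![1, 1; gp x m, 0] : Matrix (Fin 2) (Fin 2) ℂ) 0 j with hA
    set B := (gB x m i 1 - gB x' m i 1) * (!![1, 1; gp x m, 0] : Matrix (Fin 2) (Fin 2) ℂ) 1 j with hB
    set C := gB x' m i 0 * ((!![1, 1; gp x m, 0] : Matrix (Fin 2) (Fin 2) ℂ) 0 j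
            - (!![1, 1; gp x' m, 0] : Matrix (Fin 2) (Fin 2) ℂ) 0 j) with hC
    set D := gB x' m i 1 * ((!![1, 1; gp x m, 0] : Matrix (Fin 2) (Fin 2) ℂ) 1 j
            - (!![1, 1; gp x' m, 0] : Matrix (Fin 2) (Fin 2) ℂ) 1 j) with hD
    rw [hid]
    have h4 : ‖A + B + C + D‖ ≤ ‖A‖ + ‖B‖ + ‖C‖ + ‖D‖ := by
      calc ‖A + B + C + D‖ ≤ ‖A + B + C‖ + ‖D‖ := norm_add_le _ _
      _ ≤ (‖A + B‖ + ‖C‖) + ‖D‖ := by gcongr; exact norm_add_le _ _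
      _ ≤ ((‖A‖ + ‖B‖) + ‖C‖) + ‖D‖ := by gcongr; exact norm_add_le _ _
      _ = _ := by ring
    have d0 := ih hdm i 0
    have d1 := ih hdm i 1
    have e0 := Bfac_norm_le0 x m j
    have e1 := Bfac_norm_le1 x hx m j
    have f1 := gB_norm_le x' hx' m i 1
    have p4 : (0:ℝ) < 4 ^ m := by positivity
    have hmn : (0:ℝ) ≤ 6 * m * 4 ^ m * η := by positivity
    have TA : ‖A‖ ≤ 6 * m * 4 ^ m * η * 1 := by
      rw [hA, norm_mul]
      exact mul_le_mul d0 e0 (norm_nonneg _) hmn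
    have TB : ‖B‖ ≤ 6 * m * 4 ^ m * η * 3 := by
      rw [hB, norm_mul]
      exact mul_le_mul d1 e1 (norm_nonneg _) hmn
    have TC : ‖C‖ = 0 := by
      rw [hC, hB0, sub_self, mul_zero, norm_zero]
    have TD : ‖D‖ ≤ 4 ^ m * (6 * η) := by
      rw [hD, norm_mul]
      exact mul_le_mul f1 hB1 (norm_nonneg _) (le_of_lt p4)
    have hexp : 6 * ((m:ℝ)+1) * 4 ^ (m+1) * η = 24 * m * 4 ^ m * η + 24 * 4 ^ m * η := by
      rw [pow_succ]; ring
    have h4mη : (0:ℝ) ≤ 4 ^ m * η := by positivity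
    push_cast
    rw [hexp]
    nlinarith [h4, TA, TB, TC, TD]
end lip2



/-! ## frobSq difference bound -/

lemma absq_diff (z w : ℂ) (R d : ℝ) (hz : ‖z‖ ≤ R) (hw : ‖w‖ ≤ R)
    (hd : ‖z - w‖ ≤ d) : |‖z‖ ^ 2 - ‖w‖ ^ 2| ≤ 2 * R * d := by
  have h1 : |‖z‖ - ‖w‖| ≤ ‖z - w‖ :=
    abs_norm_sub_norm_le z w
  have h2 := abs_le.mp h1
  have hz0 := norm_nonneg z
  have hw0 := norm_nonneg w
  have hzw := norm_nonneg (z - w)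
  rw [abs_le]
  constructor <;> nlinarith

lemma frobSq_gB_diff (x x' : ℕ → ℂ) (hx : ∀ l, ‖x l‖ ≤ 1) (hx' : ∀ l, ‖x' l‖ ≤ 1)
    (η : ℝ) (hη : 0 ≤ η) (n : ℕ) (hd : ∀ l, l ≤ n → ‖x l - x' l‖ ≤ η) :
    |frobSq (gB x n) - frobSq (gB x' n)| ≤ 96 * n * (4 ^ n * 4 ^ n) * η := by
  have hterm : ∀ i j : Fin 2,
      |‖gB x n i j‖ ^ 2 - ‖gB x' n i j‖ ^ 2|
        ≤ 2 * 4 ^ n * (6 * n * 4 ^ n * η) := fun i j =>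
    absq_diff _ _ _ _ (gB_norm_le x hx n i j) (gB_norm_le x' hx' n i j)
      (gB_diff x x' hx hx' η hη n hd i j)
  have expand : ∀ y : ℕ → ℂ, frobSq (gB y n) =
      ‖gB y n 0 0‖ ^ 2 + ‖gB y n 0 1‖ ^ 2
        + ‖gB y n 1 0‖ ^ 2 + ‖gB y n 1 1‖ ^ 2 := by
    intro y
    unfold frobSq
    rw [Fin.sum_univ_two, Fin.sum_univ_two, Fin.sum_univ_two]
    ring
  rw [expand x, expand x']
  have t00 := hterm 0 0
  have t01 := hterm 0 1
  have t10 := hterm 1 0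
  have t11 := hterm 1 1
  have habs := abs_le.mp t00
  have habs2 := abs_le.mp t01
  have habs3 := abs_le.mp t10
  have habs4 := abs_le.mp t11
  rw [abs_le]
  have hp : (0:ℝ) ≤ 4 ^ n := by positivity
  constructor <;> nlinarith


/-! ## Almost periods -/

lemma Wseq_add (s t : ℝ) (j : ℕ) : Wseq (s + t) j = Wseq s j * Wseq t j := by
  unfold Wseq
  rw [← exp_coe_add]
  congr 2
  ring

lemma Wseq_zero (j : ℕ) : Wseq 0 j = 1 := by
  unfold Wseq
  norm_num

lemma Wseq_shift_diff (x t : ℝ) (j : ℕ) :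
    ‖Wseq (x - t) j - Wseq x j‖ = ‖Wseq (-t) j - 1‖ := by
  have h1 : Wseq (x - t) j = Wseq x j * Wseq (-t) j := by
    rw [show x - t = x + (-t) by ring, Wseq_add]
  rw [h1, show Wseq x j * Wseq (-t) j - Wseq x j = Wseq x j * (Wseq (-t) j - 1) by ring,
    norm_mul, Wseq_norm, one_mul]

lemma Wseq_neg_sub (s u : ℝ) (j : ℕ) :
    ‖Wseq (-(s - u)) j - 1‖ = ‖Wseq u j - Wseq s j‖ := by
  have h1 : Wseq (-(s-u)) j = Wseq (-s) j * Wseq u j := by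
    rw [show -(s-u) = -s + u by ring, Wseq_add]
  have h2 : Wseq (-s) j * Wseq s j = 1 := by
    rw [← Wseq_add, show -s + s = 0 by ring, Wseq_zero]
  calc ‖Wseq (-(s-u)) j - 1‖ = ‖Wseq (-s) j * (Wseq u j - Wseq s j)‖ := by
        rw [mul_sub, ← h1, h2]
  _ = ‖Wseq u j - Wseq s j‖ := by
      rw [norm_mul, Wseq_norm, one_mul]

/-- relative density of simultaneous almost periods -/
lemma relDense (n : ℕ) (η : ℝ) (hη : 0 < η) :
    ∃ L : ℝ, 0 < L ∧ ∀ x₀ : ℝ, ∃ t ∈ Set.Icc x₀ (x₀ + L),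
      ∀ j ≤ n, ‖Wseq (-t) j - 1‖ ≤ η := by
  classical
  set V := Fin (n+1) → ℂ
  set Φ : ℝ → V := fun r j => Wseq r (j : ℕ) with hΦ
  have hS : Set.range Φ ⊆ Metric.closedBall (0 : V) 1 := by
    rintro _ ⟨r, rfl⟩
    rw [Metric.mem_closedBall, dist_zero_right]
    apply pi_norm_le_iff_of_nonneg zero_le_one |>.mpr
    intro j
    rw [show Φ r j = Wseq r (j:ℕ) from rfl, Wseq_norm]
  have htb : TotallyBounded (Set.range Φ) :=
    (isCompact_closedBall (0 : V) 1).totallyBounded.subset hS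
  obtain ⟨T, hTsub, hTfin, hTcov⟩ := totallyBounded_iff_subset.mp htb
    {p : V × V | dist p.1 p.2 < η} (Metric.dist_mem_uniformity hη)
  -- choose representatives
  have hrep : ∀ y ∈ T, ∃ u : ℝ, Φ u = y := fun y hy => hTsub hy
  -- T is nonempty
  have hTne : T.Nonempty := by
    rcases Set.eq_empty_or_nonempty T with h | h
    · exfalso
      have := hTcov (Set.mem_range_self (0 : ℝ))
      rw [h] at this
      simpa using this
    · exact h
  choose uof huof_spec using hrep
  set F := hTfin.toFinset with hF
  have hFne : F.Nonempty := by
    rw [hF, Set.Finite.toFinset_nonempty]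
    exact hTne
  have hmemT : ∀ z : {z // z ∈ F}, z.1 ∈ T := fun z =>
    (Set.Finite.mem_toFinset hTfin).mp z.2
  have hFatt : F.attach.Nonempty := Finset.attach_nonempty_iff.mpr hFne
  set M : ℝ := F.attach.sup' hFatt (fun z => |uof z.1 (hmemT z)|) with hM
  have hM0 : 0 ≤ M := by
    obtain ⟨z, hz⟩ := hFatt
    exact le_trans (abs_nonneg _) (Finset.le_sup' (fun z => |uof z.1 (hmemT z)|) hz)
  refine ⟨2 * M + 1, by linarith, ?_⟩
  intro x₀
  set s := x₀ + M with hs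
  have : Φ s ∈ ⋃ y ∈ T, {x | (x, y) ∈ {p : V × V | dist p.1 p.2 < η}} :=
    hTcov (Set.mem_range_self s)
  rw [Set.mem_iUnion₂] at this
  obtain ⟨y, hyT, hydist⟩ := this
  have hyF : y ∈ F := by rw [hF, Set.Finite.mem_toFinset]; exact hyT
  have huM : |uof y hyT| ≤ M :=
    Finset.le_sup' (fun z => |uof z.1 (hmemT z)|) (Finset.mem_attach F ⟨y, hyF⟩)
  refine ⟨s - uof y hyT, ?_, ?_⟩
  · rw [Set.mem_Icc]
    have := abs_le.mp huM
    constructor <;> [linarith; linarith]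
  · intro j hj
    rw [Wseq_neg_sub]
    have hcoord : dist (Φ s ⟨j, by omega⟩) (y ⟨j, by omega⟩) ≤ dist (Φ s) y :=
      dist_le_pi_dist (Φ s) y ⟨j, by omega⟩
    have hdist : dist (Φ s) y < η := hydist
    have hyc : y ⟨j, by omega⟩ = Wseq (uof y hyT) j :=
      (congrFun (huof_spec y hyT) ⟨j, by omega⟩).symm
    have : dist (Wseq s j) (Wseq (uof y hyT) j) ≤ dist (Φ s) y := by
      rw [← hyc]
      exact hcoord
    rw [dist_eq_norm] at this
    rw [show ‖Wseq (uof y hyT) j - Wseq s j‖ = ‖Wseq s j - Wseq (uof y hyT) j‖ from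
      norm_sub_rev _ _]
    linarith

/-- logarithm difference bound -/
lemma log_diff_le (a b δ : ℝ) (hδ : 0 < δ) (ha : δ ≤ a) (hb : δ ≤ b) :
    |Real.log a - Real.log b| ≤ |a - b| / δ := by
  have key : ∀ u v : ℝ, δ ≤ u → δ ≤ v → Real.log u - Real.log v ≤ |u - v| / δ := by
    intro u v hu hv
    rcases le_total u v with h | h
    · have h1 : Real.log u ≤ Real.log v :=
        Real.log_le_log (by linarith) h
      have h2 : (0:ℝ) ≤ |u - v| / δ := by positivity
      linarith
    · have hv0 : 0 < v := lt_of_lt_of_le hδ hv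
      have hu0 : 0 < u := lt_of_lt_of_le hδ hu
      have h1 : Real.log u - Real.log v = Real.log (u / v) := by
        rw [Real.log_div (ne_of_gt hu0) (ne_of_gt hv0)]
      have h2 : Real.log (u / v) ≤ u / v - 1 :=
        Real.log_le_sub_one_of_pos (by positivity)
      have h3 : u / v - 1 = (u - v) / v := by field_simp
      have h4 : (u - v) / v ≤ (u - v) / δ := by
        apply div_le_div_of_nonneg_left (by linarith) hδ hv
      have h5 : (u - v) / δ ≤ |u - v| / δ := by
        gcongr
        exact le_abs_self _
      linarith
  rw [abs_sub_le_iff]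
  constructor
  · exact key a b ha hb
  · rw [abs_sub_comm]
    exact key b a hb ha


/-! ## Final assembly -/

lemma Wseq_cont : Continuous fun k : ℝ => Wseq k := by
  apply continuous_pi
  intro j
  unfold Wseq
  apply Complex.continuous_exp.comp
  apply Continuous.mul _ continuous_const
  exact Complex.continuous_ofReal.comp (by continuity)

lemma F_cont (n : ℕ) : Continuous fun k : ℝ => frobSq (Bout k n) := by
  have he : (fun k : ℝ => frobSq (Bout k n))
      = (fun x => frobSq (gB x n)) ∘ fun k => Wseq k := by
    funext k
    simp [Bout_eq_gB]
  rw [he]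
  exact (frobSq_gB_cont n).comp Wseq_cont


end

/-- For every `n ≥ 1` there is `δ > 0` with `‖B⁽ⁿ⁾(k)‖_F² ≥ δ` for all `k ∈ ℝ`;
consequently `k ↦ log(‖B⁽ⁿ⁾(k)‖_F²)` is Bohr almost periodic. -/
theorem stmt13 (n : ℕ) (hn : 1 ≤ n) :
    (∃ δ : ℝ, 0 < δ ∧ ∀ k : ℝ, δ ≤ frobSq (Bout k n)) ∧
    IsBohrAP fun k => Real.log (frobSq (Bout k n)) := by
  obtain ⟨δ, hδ, hlow⟩ := partA n hn
  refine ⟨⟨δ, hδ, hlow⟩, ?_, ?_⟩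
  · apply (F_cont n).log
    intro k
    exact ne_of_gt (lt_of_lt_of_le hδ (hlow k))
  · intro ε hε
    set C : ℝ := 96 * n * (4 ^ n * 4 ^ n) + 1 with hC
    have hC0 : 0 < C := by positivity
    set η : ℝ := δ * ε / (2 * C) with hη'
    have hη : 0 < η := by positivity
    obtain ⟨L, hL, hrel⟩ := relDense n η hη
    refine ⟨L, hL, ?_⟩
    intro x₀
    obtain ⟨t, htIcc, hper⟩ := hrel x₀
    refine ⟨t, htIcc, ?_⟩
    intro x
    have hdif : |frobSq (Bout (x - t) n) - frobSq (Bout x n)|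
        ≤ 96 * n * (4 ^ n * 4 ^ n) * η := by
      rw [Bout_eq_gB, Bout_eq_gB]
      apply frobSq_gB_diff _ _ (fun l => le_of_eq (Wseq_norm _ l))
        (fun l => le_of_eq (Wseq_norm _ l)) η (le_of_lt hη) n
      intro l hl
      rw [Wseq_shift_diff]
      exact hper l hl
    have h1 : δ ≤ frobSq (Bout (x - t) n) := hlow _
    have h2 : δ ≤ frobSq (Bout x n) := hlow _
    have h3 := log_diff_le _ _ δ hδ h1 h2
    have h4 : |frobSq (Bout (x - t) n) - frobSq (Bout x n)| / δ
        ≤ (96 * n * (4 ^ n * 4 ^ n) * η) / δ := by gcongr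
    have hA : (0:ℝ) ≤ 96 * n * (4 ^ n * 4 ^ n) := by positivity
    have hAC : 96 * (n:ℝ) * (4 ^ n * 4 ^ n) < C := by rw [hC]; linarith
    have h5 : (96 * (n:ℝ) * (4 ^ n * 4 ^ n) * η) / δ < ε := by
      have heq : (96 * (n:ℝ) * (4 ^ n * 4 ^ n) * η) / δ
          = (96 * (n:ℝ) * (4 ^ n * 4 ^ n)) * ε / (2 * C) := by
        rw [hη']
        field_simp
      rw [heq, div_lt_iff₀ (by positivity : (0:ℝ) < 2 * C)]
      nlinarith
    exact lt_of_le_of_lt (le_trans h3 h4) h5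
end

section
/- Let λ > 1 be fixed and let h ∈ L¹([0,1], ℂ) satisfy h(x/λ) = λ·h(x) for almost every x ∈ [0,1]. Then h = 0, i.e. h(x) = 0 for almost every x ∈ [0,1]. -/
open MeasureTheory

/-- Let `λ > 1` be fixed and let `h ∈ L¹([0,1], ℂ)` satisfy `h(x/λ) = λ·h(x)` for almost
every `x ∈ [0,1]`. Then `h = 0`, i.e. `h(x) = 0` for almost every `x ∈ [0,1]`. -/
theorem stmt17 (lm : ℝ) (hlm : 1 < lm) (h : ℝ → ℂ)
    (hint : IntegrableOn h (Set.Icc (0 : ℝ) 1))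
    (heq : ∀ᵐ x ∂(volume.restrict (Set.Icc (0 : ℝ) 1)), h (x / lm) = (lm : ℂ) * h x) :
    ∀ᵐ x ∂(volume.restrict (Set.Icc (0 : ℝ) 1)), h x = 0 := by
  have hlm0 : (0:ℝ) < lm := lt_trans zero_lt_one hlm
  have hlmne : lm ≠ 0 := ne_of_gt hlm0
  set g : ℝ → ℝ := fun x => ‖h x‖ with hg
  have hgint : IntegrableOn g (Set.Icc (0:ℝ) 1) := hint.norm
  -- key step : for 0 < c ≤ 1, ∫_0^{c/lm} g = ∫_0^c g
  have key : ∀ c : ℝ, 0 < c → c ≤ 1 →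
      (∫ x in (0:ℝ)..(c/lm), g x) = ∫ x in (0:ℝ)..c, g x := by
    intro c hc0 hc1
    have hsub : (∫ x in (0:ℝ)..c, g (x / lm)) = lm • ∫ x in (0:ℝ)/lm..(c/lm), g x :=
      intervalIntegral.integral_comp_div (a := 0) (b := c) g hlmne
    have hcongr : (∫ x in (0:ℝ)..c, g (x / lm)) = ∫ x in (0:ℝ)..c, lm * g x := by
      apply intervalIntegral.integral_congr_ae
      have hss : Set.uIoc (0:ℝ) c ⊆ Set.Icc (0:ℝ) 1 := by
        rw [Set.uIoc_of_le hc0.le]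
        exact fun x hx => ⟨hx.1.le, hx.2.trans hc1⟩
      have heq' : ∀ᵐ x ∂(volume.restrict (Set.uIoc (0:ℝ) c)),
          h (x / lm) = (lm : ℂ) * h x :=
        ae_restrict_of_ae_restrict_of_subset hss heq
      have := (ae_restrict_iff' measurableSet_uIoc).mp heq'
      filter_upwards [this] with x hx hx'
      simp only [hg, hx hx', norm_mul, Complex.norm_real, Real.norm_eq_abs,
        abs_of_pos hlm0]
    rw [hcongr, intervalIntegral.integral_const_mul] at hsub
    have : (0:ℝ)/lm = 0 := by ring
    rw [this] at hsub
    have := hsub.symm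
    rw [smul_eq_mul] at this
    exact mul_left_cancel₀ hlmne this
  -- iterate
  have iter : ∀ n : ℕ, (∫ x in (0:ℝ)..((lm ^ n)⁻¹), g x) = ∫ x in (0:ℝ)..1, g x := by
    intro n
    induction n with
    | zero => simp
    | succ n ih =>
      have hpow : (0:ℝ) < (lm ^ n)⁻¹ := by positivity
      have hpow1 : (lm ^ n)⁻¹ ≤ 1 := by
        rw [inv_le_one_iff₀]; right; exact one_le_pow₀ hlm.le
      have := key ((lm ^ n)⁻¹) hpow hpow1
      rw [← ih, ← this]
      congr 1
      rw [pow_succ, mul_inv, div_eq_mul_inv]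
  -- limit: LHS tends to 0
  have hIoc : ∀ n : ℕ, (∫ x in (0:ℝ)..((lm ^ n)⁻¹), g x)
      = ∫ x in Set.Ioc (0:ℝ) ((lm ^ n)⁻¹), g x ∂(volume.restrict (Set.Icc (0:ℝ) 1)) := by
    intro n
    have hpow : (0:ℝ) ≤ (lm ^ n)⁻¹ := by positivity
    have hpow1 : (lm ^ n)⁻¹ ≤ 1 := by
      rw [inv_le_one_iff₀]; right; exact one_le_pow₀ hlm.le
    rw [intervalIntegral.integral_of_le hpow,
      Measure.restrict_restrict measurableSet_Ioc]
    congr 1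
    rw [Set.inter_eq_left.mpr]
    exact fun x hx => ⟨hx.1.le, hx.2.trans hpow1⟩
  have htend : Filter.Tendsto (fun n : ℕ =>
      ∫ x in Set.Ioc (0:ℝ) ((lm ^ n)⁻¹), g x ∂(volume.restrict (Set.Icc (0:ℝ) 1)))
      Filter.atTop (nhds 0) := by
    apply hgint.tendsto_setIntegral_nhds_zero
    have hmeas : Filter.Tendsto (fun n : ℕ => ENNReal.ofReal ((lm ^ n)⁻¹))
        Filter.atTop (nhds 0) := by
      rw [← ENNReal.ofReal_zero]
      apply ENNReal.tendsto_ofReal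
      apply tendsto_inv_atTop_zero.comp
      exact tendsto_pow_atTop_atTop_of_one_lt hlm
    apply tendsto_of_tendsto_of_tendsto_of_le_of_le tendsto_const_nhds hmeas
    · intro n; exact zero_le
    · intro n
      calc (volume.restrict (Set.Icc (0:ℝ) 1)) (Set.Ioc (0:ℝ) ((lm ^ n)⁻¹))
          ≤ volume (Set.Ioc (0:ℝ) ((lm ^ n)⁻¹)) := Measure.restrict_le_self _
        _ = ENNReal.ofReal ((lm ^ n)⁻¹ - 0) := by rw [Real.volume_Ioc]
        _ = ENNReal.ofReal ((lm ^ n)⁻¹) := by rw [sub_zero]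
  have hI0 : (∫ x in (0:ℝ)..1, g x) = 0 := by
    have heqf : (fun n : ℕ =>
        ∫ x in Set.Ioc (0:ℝ) ((lm ^ n)⁻¹), g x ∂(volume.restrict (Set.Icc (0:ℝ) 1)))
        = fun _ : ℕ => ∫ x in (0:ℝ)..1, g x :=
      funext fun n => by rw [← hIoc n, iter n]
    rw [heqf] at htend
    exact tendsto_nhds_unique tendsto_const_nhds htend
  -- conclude
  have hrestr : volume.restrict (Set.Icc (0:ℝ) 1) = volume.restrict (Set.Ioc (0:ℝ) 1) :=
    (Measure.restrict_congr_set MeasureTheory.Ioc_ae_eq_Icc).symm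
  have hgint' : IntegrableOn g (Set.Ioc (0:ℝ) 1) :=
    hgint.mono_set Set.Ioc_subset_Icc_self
  have hI0' : (∫ x in Set.Ioc (0:ℝ) 1, g x) = 0 := by
    rw [← intervalIntegral.integral_of_le zero_le_one]; exact hI0
  have hg0 : ∀ᵐ x ∂(volume.restrict (Set.Ioc (0:ℝ) 1)), g x = 0 := by
    have := (integral_eq_zero_iff_of_nonneg
      (fun x => norm_nonneg (h x)) hgint').mp hI0'
    filter_upwards [this] with x hx using hx
  rw [hrestr]
  filter_upwards [hg0] with x hx
  exact norm_eq_zero.mp hx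
end

section
/- Let g : (0,∞) → ℝ be locally Lebesgue-integrable and nonnegative, and let λ > 1 be fixed. Assume g satisfies g(λx) ≥ ϑ(x)·g(x) for almost every x > 0, where ϑ is a bounded measurable function with ϑ(x) > 1 and ϑ(λx) = ϑ(x) for almost every x > 0. Then the absolutely continuous measure g·μ_L is translation bounded (i.e. sup_{t≥0} ∫_t^{t+1} g(x) dx < ∞) if and only if g = 0 almost everywhere on (0,∞). -/
open MeasureTheory

/-- Pulling back an a.e. property on `(0,∞)` along multiplication by a positive constant. -/
lemma ae_scale_aux {c : ℝ} (hc : 0 < c) {q : ℝ → Prop}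
    (h : ∀ᵐ x ∂(volume : Measure ℝ), x ∈ Set.Ioi (0 : ℝ) → q x) :
    ∀ᵐ x ∂(volume : Measure ℝ), x ∈ Set.Ioi (0 : ℝ) → q (c * x) := by
  rw [MeasureTheory.ae_iff] at h ⊢
  have hsub : {x : ℝ | ¬(x ∈ Set.Ioi (0 : ℝ) → q (c * x))} ⊆
      (fun x : ℝ => c * x) ⁻¹' {x : ℝ | ¬(x ∈ Set.Ioi (0 : ℝ) → q x)} := by
    intro x hx
    exact fun himp => hx fun hx0 => himp (mul_pos hc hx0)
  refine measure_mono_null hsub ?_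
  rw [Real.volume_preimage_mul_left hc.ne' _, h, mul_zero]

/-- Let `g : (0,∞) → ℝ` be locally integrable and nonnegative, `λ > 1`, and assume
`g(λx) ≥ ϑ(x)·g(x)` for a.e. `x > 0`, where `ϑ` is bounded, measurable, satisfies
`ϑ(x) > 1` and `ϑ(λx) = ϑ(x)` for a.e. `x > 0`. Then the absolutely continuous measure
`g·μ_L` is translation bounded (i.e. `sup_{t≥0} ∫_t^{t+1} g < ∞`) if and only if
`g = 0` almost everywhere on `(0,∞)`. -/
theorem stmt18 (g θ : ℝ → ℝ) (lm : ℝ) (hlm : 1 < lm)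
    (hloc : LocallyIntegrableOn g (Set.Ioi (0 : ℝ)) volume)
    (hg_nn : ∀ᵐ x ∂(volume.restrict (Set.Ioi (0 : ℝ))), 0 ≤ g x)
    (hθ_meas : Measurable θ) (hθ_bdd : ∃ Cb : ℝ, ∀ x : ℝ, |θ x| ≤ Cb)
    (hθ_gt : ∀ᵐ x ∂(volume.restrict (Set.Ioi (0 : ℝ))), 1 < θ x)
    (hθ_per : ∀ᵐ x ∂(volume.restrict (Set.Ioi (0 : ℝ))), θ (lm * x) = θ x)
    (hineq : ∀ᵐ x ∂(volume.restrict (Set.Ioi (0 : ℝ))), θ x * g x ≤ g (lm * x)) :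
    (∃ Cb : ℝ, ∀ t : ℝ, 0 ≤ t → ∫ x in t..(t + 1), g x ≤ Cb) ↔
      (∀ᵐ x ∂(volume.restrict (Set.Ioi (0 : ℝ))), g x = 0) := by
  have hlm0 : (0 : ℝ) < lm := lt_trans one_pos hlm
  constructor
  · -- hard direction
    rintro ⟨Cb, hCb⟩
    -- integrability of g on Ioc u v for 0 < u
    have hInt : ∀ u v : ℝ, 0 < u → IntegrableOn g (Set.Ioc u v) volume := by
      intro u v hu
      exact (hloc.integrableOn_compact_subset
        (fun x hx => lt_of_lt_of_le hu hx.1) isCompact_Icc).mono_set Set.Ioc_subset_Icc_self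
    -- Cb is nonnegative
    have hCb0 : 0 ≤ Cb := by
      refine le_trans ?_ (hCb 1 zero_le_one)
      rw [intervalIntegral.integral_of_le (by norm_num)]
      refine setIntegral_nonneg_of_ae_restrict ?_
      exact ae_restrict_of_ae_restrict_of_subset
        (fun x hx => lt_trans one_pos hx.1) hg_nn
    -- covering lemma
    have L : ∀ N : ℕ, ∀ t : ℝ, 0 < t → ∫ y in Set.Ioc t (t + N), g y ≤ N * Cb := by
      intro N
      induction N with
      | zero => intro t ht; simp
      | succ N ih =>
        intro t ht
        have h1 : IntegrableOn g (Set.Ioc t (t + N)) volume := hInt _ _ ht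
        have h2 : IntegrableOn g (Set.Ioc (t + N) (t + N + 1)) volume :=
          hInt _ _ (by positivity)
        have hdisj : Disjoint (Set.Ioc t (t + N)) (Set.Ioc (t + N) (t + N + 1)) := by
          rw [Set.disjoint_left]
          rintro x ⟨_, hx2⟩ ⟨hx3, _⟩
          exact absurd hx2 (not_le.mpr hx3)
        have hsplit : Set.Ioc t (t + (N + 1 : ℕ)) =
            Set.Ioc t (t + N) ∪ Set.Ioc (t + N) (t + N + 1) := by
          rw [Set.Ioc_union_Ioc_eq_Ioc (by linarith [Nat.cast_nonneg (α := ℝ) N]) (by linarith)]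
          push_cast; ring_nf
        rw [hsplit, setIntegral_union hdisj measurableSet_Ioc h1 h2]
        have h3 : ∫ y in Set.Ioc (t + N) (t + N + 1), g y ≤ Cb := by
          have := hCb (t + N) (by positivity)
          rwa [intervalIntegral.integral_of_le (by linarith)] at this
        have h4 := ih t ht
        push_cast
        linarith
    by_contra hne
    -- measurable representative G of g
    have hgae : AEMeasurable g (volume.restrict (Set.Ioi (0 : ℝ))) :=
      hloc.aestronglyMeasurable.aemeasurable
    set G : ℝ → ℝ := hgae.mk g with hGdef
    have hGm : Measurable G := hgae.measurable_mk
    have hGe : g =ᵐ[volume.restrict (Set.Ioi (0 : ℝ))] G := hgae.ae_eq_mk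
    -- transfer a.e. statements to plain volume with implications
    have hg_nn' := (ae_restrict_iff' measurableSet_Ioi).mp hg_nn
    have hθ_gt' := (ae_restrict_iff' measurableSet_Ioi).mp hθ_gt
    have hθ_per' := (ae_restrict_iff' measurableSet_Ioi).mp hθ_per
    have hineq' := (ae_restrict_iff' measurableSet_Ioi).mp hineq
    have hGe' := (ae_restrict_iff' measurableSet_Ioi).mp hGe
    have hGe'' := ae_scale_aux hlm0 hGe'
    set P : ℝ → Prop := fun y =>
      0 ≤ G y ∧ 1 < θ y ∧ θ (lm * y) = θ y ∧ θ y * G y ≤ G (lm * y) with hPdef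
    have hP : ∀ᵐ x ∂(volume : Measure ℝ), x ∈ Set.Ioi (0 : ℝ) → P x := by
      filter_upwards [hg_nn', hθ_gt', hθ_per', hineq', hGe', hGe''] with x h1 h2 h3 h4 h5 h6 hx
      refine ⟨(h5 hx) ▸ h1 hx, h2 hx, h3 hx, ?_⟩
      rw [← h5 hx, ← h6 hx]
      exact h4 hx
    have hPn : ∀ᵐ x ∂(volume : Measure ℝ),
        x ∈ Set.Ioi (0 : ℝ) → ∀ n : ℕ, P (lm ^ n * x) := by
      have h1 : ∀ n : ℕ, ∀ᵐ x ∂(volume : Measure ℝ), x ∈ Set.Ioi (0 : ℝ) → P (lm ^ n * x) :=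
        fun n => ae_scale_aux (pow_pos hlm0 n) hP
      filter_upwards [ae_all_iff.mpr h1] with x hx h0 n
      exact hx n h0
    set Z : Set ℝ := {x | ¬(x ∈ Set.Ioi (0 : ℝ) → ∀ n : ℕ, P (lm ^ n * x))} with hZdef
    have hZnull : volume Z = 0 := hPn
    set Z' : Set ℝ := MeasureTheory.toMeasurable volume Z with hZ'def
    have hZ'null : volume Z' = 0 := by rw [hZ'def, measure_toMeasurable]; exact hZnull
    set W : Set ℝ := (Set.Ioi (0 : ℝ) ∩ {x | G x ≠ 0}) \ Z' with hWdef
    have hWm : MeasurableSet W :=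
      (measurableSet_Ioi.inter ((hGm (measurableSet_singleton 0)).compl)).diff
        (measurableSet_toMeasurable _ _)
    have hWQ : ∀ x ∈ W, ∀ n : ℕ, P (lm ^ n * x) := by
      intro x hx n
      by_contra hcon
      exact hx.2 (subset_toMeasurable volume Z
        (show ¬_ from fun himp => hcon (himp hx.1.1 n)))
    have hWne : volume W ≠ 0 := by
      have hne2 : ¬(∀ᵐ x ∂(volume.restrict (Set.Ioi (0 : ℝ))), G x = 0) := by
        intro h
        exact hne (by filter_upwards [h, hGe] with x h1 h2; rw [h2]; exact h1)
      rw [MeasureTheory.ae_iff, Measure.restrict_apply' measurableSet_Ioi] at hne2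
      intro hW0
      apply hne2
      have : {x | ¬ G x = 0} ∩ Set.Ioi 0 ⊆ W ∪ Z' := by
        intro x hx
        by_cases hz : x ∈ Z'
        · exact Or.inr hz
        · exact Or.inl ⟨⟨hx.2, hx.1⟩, hz⟩
      exact measure_mono_null this
        (le_antisymm (le_trans (measure_union_le _ _) (by rw [hW0, hZ'null]; simp))
          (zero_le))
    -- decompose W into countably many good pieces
    set Wk : ℕ → Set ℝ := fun k =>
      W ∩ {x | 1 / ((k : ℝ) + 1) ≤ G x} ∩ {x | 1 + 1 / ((k : ℝ) + 1) ≤ θ x} ∩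
        Set.Ioc (1 / ((k : ℝ) + 1)) ((k : ℝ) + 1) with hWkdef
    have hWsub : W ⊆ ⋃ k : ℕ, Wk k := by
      intro x hx
      have hx0 : (0 : ℝ) < x := hx.1.1
      have hP0 : P x := by
        have := hWQ x hx 0
        rwa [pow_zero, one_mul] at this
      have hGpos : 0 < G x := lt_of_le_of_ne hP0.1 (Ne.symm hx.1.2)
      have hθpos : 0 < θ x - 1 := sub_pos.mpr hP0.2.1
      obtain ⟨k1, hk1⟩ := exists_nat_one_div_lt hGpos
      obtain ⟨k2, hk2⟩ := exists_nat_one_div_lt hθpos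
      obtain ⟨k3, hk3⟩ := exists_nat_one_div_lt hx0
      obtain ⟨k4, hk4⟩ := exists_nat_ge x
      set k := k1 ⊔ k2 ⊔ k3 ⊔ k4 with hkdef
      have hmono : ∀ j : ℕ, j ≤ k → 1 / ((k : ℝ) + 1) ≤ 1 / ((j : ℝ) + 1) := by
        intro j hj
        apply one_div_le_one_div_of_le (by positivity)
        have : (j : ℝ) ≤ (k : ℝ) := Nat.cast_le.mpr hj
        linarith
      refine Set.mem_iUnion.mpr ⟨k, ⟨⟨hx, ?_⟩, ?_⟩, ?_, ?_⟩
      · exact le_trans (hmono k1 (by omega)) hk1.le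
      · show 1 + 1 / ((k : ℝ) + 1) ≤ θ x
        have := le_trans (hmono k2 (by omega)) hk2.le
        linarith
      · exact lt_of_le_of_lt (hmono k3 (by omega)) hk3
      · have : (k4 : ℝ) ≤ (k : ℝ) := Nat.cast_le.mpr (by omega)
        linarith
    obtain ⟨k, hk0⟩ : ∃ k : ℕ, volume (Wk k) ≠ 0 := by
      by_contra h
      push_neg at h
      exact hWne (measure_mono_null hWsub (measure_iUnion_null h))
    set a : ℝ := 1 / ((k : ℝ) + 1) with hadef
    set b : ℝ := (k : ℝ) + 1 with hbdef
    have ha : 0 < a := by positivity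
    have hab : a ≤ b := by
      rw [hadef, hbdef]
      rw [div_le_iff₀ (by positivity)]
      nlinarith [Nat.cast_nonneg (α := ℝ) k]
    set S : Set ℝ := Wk k with hSdef
    have hSsub : S ⊆ Set.Ioc a b := fun x hx => hx.2
    have hSm : MeasurableSet S :=
      ((hWm.inter (hGm measurableSet_Ici)).inter (hθ_meas measurableSet_Ici)).inter
        measurableSet_Ioc
    have hSfin : volume S ≠ ⊤ :=
      ne_top_of_le_ne_top (by rw [Real.volume_Ioc]; exact ENNReal.ofReal_ne_top)
        (measure_mono hSsub)
    set m : ℝ := (volume S).toReal with hmdef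
    have hm : 0 < m := ENNReal.toReal_pos hk0 hSfin
    -- pointwise growth on S
    have key : ∀ x ∈ S, ∀ n : ℕ, (1 + a) ^ n * a ≤ G (lm ^ n * x) := by
      intro x hxS n
      have hxW : x ∈ W := hxS.1.1.1
      have hQ := hWQ x hxW
      have hP0 : P x := by have := hQ 0; rwa [pow_zero, one_mul] at this
      have hθ1 : 1 < θ x := hP0.2.1
      have hθc : ∀ j : ℕ, θ (lm ^ j * x) = θ x := by
        intro j
        induction j with
        | zero => rw [pow_zero, one_mul]
        | succ j ih =>
          have h1 := (hQ j).2.2.1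
          rw [show lm ^ (j + 1) * x = lm * (lm ^ j * x) by rw [pow_succ]; ring, h1, ih]
      have hgrow : ∀ j : ℕ, θ x ^ j * G x ≤ G (lm ^ j * x) := by
        intro j
        induction j with
        | zero => simp [pow_zero, one_mul]
        | succ j ih =>
          have h1 := (hQ j).2.2.2
          rw [hθc j] at h1
          calc θ x ^ (j + 1) * G x = θ x * (θ x ^ j * G x) := by ring
            _ ≤ θ x * G (lm ^ j * x) :=
                mul_le_mul_of_nonneg_left ih (by linarith)
            _ ≤ G (lm ^ (j + 1) * x) := by
                rw [show lm ^ (j + 1) * x = lm * (lm ^ j * x) by rw [pow_succ]; ring]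
                exact h1
      have hGx : a ≤ G x := hxS.1.1.2
      have hθx : 1 + a ≤ θ x := hxS.1.2
      have hpow : (1 + a) ^ n ≤ θ x ^ n := pow_le_pow_left₀ (by positivity) hθx n
      calc (1 + a) ^ n * a ≤ θ x ^ n * G x :=
            mul_le_mul hpow hGx ha.le (pow_nonneg (by linarith) n)
        _ ≤ G (lm ^ n * x) := hgrow n
    -- main integral bound for each n
    have main : ∀ n : ℕ, (1 + a) ^ n * a * m ≤ (b - a + 1) * Cb := by
      intro n
      set c : ℝ := lm ^ n with hcdef
      have hc1 : 1 ≤ c := one_le_pow₀ hlm.le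
      have hc0 : 0 < c := lt_of_lt_of_le one_pos hc1
      set T : Set ℝ := (fun y : ℝ => c⁻¹ * y) ⁻¹' S with hTdef
      have hTm : MeasurableSet T := hSm.preimage (measurable_const_mul c⁻¹)
      have hTvol : volume T = ENNReal.ofReal c * volume S := by
        rw [hTdef, Real.volume_preimage_mul_left (inv_ne_zero hc0.ne') S, inv_inv,
          abs_of_pos hc0]
      have hTfin : volume T ≠ ⊤ := by
        rw [hTvol]
        exact ENNReal.mul_ne_top ENNReal.ofReal_ne_top hSfin
      have hTsub : T ⊆ Set.Ioc (c * a) (c * b) := by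
        intro y hy
        have h1 : a < c⁻¹ * y := (hSsub hy).1
        have h2 : c⁻¹ * y ≤ b := (hSsub hy).2
        constructor
        · have := mul_lt_mul_of_pos_left h1 hc0
          rwa [← mul_assoc, mul_inv_cancel₀ hc0.ne', one_mul] at this
        · have := mul_le_mul_of_nonneg_left h2 hc0.le
          rwa [← mul_assoc, mul_inv_cancel₀ hc0.ne', one_mul] at this
      have hIioi : Set.Icc (c * a) (c * b) ⊆ Set.Ioi (0 : ℝ) := fun y hy =>
        lt_of_lt_of_le (by positivity) hy.1
      have hIsub : Set.Ioc (c * a) (c * b) ⊆ Set.Ioi (0 : ℝ) :=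
        Set.Subset.trans Set.Ioc_subset_Icc_self hIioi
      have hIint : IntegrableOn g (Set.Ioc (c * a) (c * b)) volume := hInt _ _ (by positivity)
      have hGg : g =ᵐ[volume.restrict (Set.Ioc (c * a) (c * b))] G :=
        ae_restrict_of_ae_restrict_of_subset hIsub hGe
      have hIintG : IntegrableOn G (Set.Ioc (c * a) (c * b)) volume := hIint.congr hGg
      have hGnnI : 0 ≤ᵐ[volume.restrict (Set.Ioc (c * a) (c * b))] G := by
        filter_upwards [ae_restrict_of_ae_restrict_of_subset hIsub hg_nn, hGg] with y h1 h2
        rw [← h2]; exact h1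
      have lower : (1 + a) ^ n * a * (volume T).toReal ≤ ∫ y in T, G y := by
        refine setIntegral_ge_of_const_le_real hTm hTfin ?_ (hIintG.mono_set hTsub)
        intro y hy
        have := key (c⁻¹ * y) hy n
        rwa [← hcdef, ← mul_assoc, mul_inv_cancel₀ hc0.ne', one_mul] at this
      have mid : ∫ y in T, G y ≤ ∫ y in Set.Ioc (c * a) (c * b), G y :=
        setIntegral_mono_set hIintG hGnnI (HasSubset.Subset.eventuallyLE hTsub)
      have eq1 : ∫ y in Set.Ioc (c * a) (c * b), G y = ∫ y in Set.Ioc (c * a) (c * b), g y :=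
        integral_congr_ae hGg.symm
      set N : ℕ := ⌈c * b - c * a⌉₊ with hNdef
      have hba : 0 ≤ c * b - c * a := by nlinarith
      have hcbN : c * b ≤ c * a + N := by
        have := Nat.le_ceil (c * b - c * a)
        linarith
      have hgnnbig : 0 ≤ᵐ[volume.restrict (Set.Ioc (c * a) (c * a + N))] g :=
        ae_restrict_of_ae_restrict_of_subset
          (fun y hy => lt_of_lt_of_le (by positivity) hy.1.le) hg_nn
      have up1 : ∫ y in Set.Ioc (c * a) (c * b), g y ≤
          ∫ y in Set.Ioc (c * a) (c * a + N), g y :=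
        setIntegral_mono_set (hInt _ _ (by positivity)) hgnnbig
          (HasSubset.Subset.eventuallyLE (Set.Ioc_subset_Ioc_right hcbN))
      have up2 : ∫ y in Set.Ioc (c * a) (c * a + N), g y ≤ N * Cb := L N (c * a) (by positivity)
      have hNle : (N : ℝ) ≤ c * (b - a) + 1 := by
        have := Nat.ceil_lt_add_one hba
        rw [hNdef]
        nlinarith
      have hvolT : (volume T).toReal = c * m := by
        rw [hTvol, ENNReal.toReal_mul, ENNReal.toReal_ofReal hc0.le, hmdef]
      have chain : (1 + a) ^ n * a * (c * m) ≤ (c * (b - a) + 1) * Cb := by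
        have h5 : (N : ℝ) * Cb ≤ (c * (b - a) + 1) * Cb :=
          mul_le_mul_of_nonneg_right hNle hCb0
        rw [← hvolT]
        linarith
      have chain2 : c * ((1 + a) ^ n * a * m) ≤ c * ((b - a + 1) * Cb) := by
        have h6 : (c * (b - a) + 1) * Cb ≤ c * ((b - a + 1) * Cb) := by nlinarith
        nlinarith [chain]
      exact le_of_mul_le_mul_left chain2 hc0
    obtain ⟨n, hn⟩ := pow_unbounded_of_one_lt ((b - a + 1) * Cb / (a * m))
      (show (1 : ℝ) < 1 + a by linarith)
    rw [div_lt_iff₀ (by positivity)] at hn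
    have := main n
    nlinarith
  · -- easy direction
    intro h0
    refine ⟨0, fun t ht => ?_⟩
    rw [intervalIntegral.integral_of_le (by linarith)]
    have hsub : Set.Ioc t (t + 1) ⊆ Set.Ioi (0 : ℝ) := fun x hx =>
      lt_of_le_of_lt ht hx.1
    have : ∀ᵐ x ∂(volume.restrict (Set.Ioc t (t + 1))), g x = 0 :=
      ae_restrict_of_ae_restrict_of_subset hsub h0
    rw [MeasureTheory.integral_eq_zero_of_ae this]
end
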